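/- arXiv:2009.09375 — 2 statements merged into one kernel-verified Lean document; each statement's English description precedes it below -/
import Mathlib

section
/- Let χ be a complex character of G. Then: (i) if y, z ∈ P̃₁ satisfy H ∩ y = H ∩ z, then e_χ y is a nonzero scalar multiple of e_χ z; (ii) if y, z ∈ P̃₁ satisfy y ⊆ z and e_χ z ≠ 0, then e_χ y ≠ 0; (iii) for all 0 ≤ i ≤ a and 0 ≤ j ≤ b, the nonzero vectors among the vectors e_χ(y ∨ u), where y ranges over P̃_{i,j,0}, form a basis of M(χ)_{i,j}. -/
open Module

variable (F : Type) [Field F] [Fintype F] (n : ℕ)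

/-- The subgroup `G` of `SL(Ṽ)` consisting of the elements fixing every
vector of the hyperplane `H`. -/
noncomputable def Gsub (H : Submodule F (Fin n → F)) :
    Subgroup ((Fin n → F) ≃ₗ[F] (Fin n → F)) where
  carrier := {g | LinearEquiv.det g = 1 ∧ ∀ v ∈ H, g v = v}
  one_mem' := ⟨map_one _, fun v _ => rfl⟩
  mul_mem' := by
    rintro g h ⟨hg1, hg2⟩ ⟨hh1, hh2⟩
    refine ⟨by rw [map_mul, hg1, hh1, one_mul], fun v hv => ?_⟩
    show g (h v) = v
    rw [hh2 v hv, hg2 v hv]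
  inv_mem' := by
    rintro g ⟨hg1, hg2⟩
    refine ⟨by rw [map_inv, hg1, inv_one], fun v hv => ?_⟩
    show g.symm v = v
    conv_lhs => rw [← hg2 v hv]
    exact g.symm_apply_apply v

/-- The image of a subspace under a linear automorphism. -/
noncomputable def smap (g : (Fin n → F) ≃ₗ[F] (Fin n → F))
    (y : Submodule F (Fin n → F)) : Submodule F (Fin n → F) :=
  Submodule.map (g : (Fin n → F) →ₗ[F] (Fin n → F)) y

/-- The `χ`-homogeneous component of the span of the basis vectors indexed by `S`. -/
noncomputable def Mcomp (H : Submodule F (Fin n → F)) (χ : Gsub F n H →* ℂ)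
    (S : Set (Submodule F (Fin n → F))) : Submodule ℂ (Submodule F (Fin n → F) → ℂ) where
  carrier := {v | (∀ y, y ∉ S → v y = 0) ∧
      ∀ g : Gsub F n H, ∀ y : Submodule F (Fin n → F),
        v (smap F n ((g⁻¹ : Gsub F n H) : (Fin n → F) ≃ₗ[F] (Fin n → F)) y) = χ g * v y}
  zero_mem' := ⟨fun _ _ => rfl, fun g y => by simp⟩
  add_mem' := by
    rintro v w ⟨hv1, hv2⟩ ⟨hw1, hw2⟩
    refine ⟨fun y hy => by simp [hv1 y hy, hw1 y hy], fun g y => ?_⟩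
    simp only [Pi.add_apply, hv2 g y, hw2 g y]
    ring
  smul_mem' := by
    rintro c v ⟨hv1, hv2⟩
    refine ⟨fun y hy => by simp [hv1 y hy], fun g y => ?_⟩
    simp only [Pi.smul_apply, hv2 g y, smul_eq_mul]
    ring

open Classical in
/-- The characteristic vector (as a function) of a single subspace `y`. -/
noncomputable def delta (y z : Submodule F (Fin n → F)) : ℂ :=
  if z = y then 1 else 0

open Classical in
/-- The idempotent `e_χ = q^{-(a+b)} Σ_{g ∈ G} χ(g⁻¹) g` applied to a vector of `ℂP̃`. -/
noncomputable def echi (H : Submodule F (Fin n → F)) [Fintype (Gsub F n H)]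
    (χ : Gsub F n H →* ℂ) (v : Submodule F (Fin n → F) → ℂ) :
    Submodule F (Fin n → F) → ℂ := fun y =>
  ((Fintype.card F : ℂ) ^ (n - 1))⁻¹ *
    ∑ g : Gsub F n H, χ g⁻¹ *
      v (smap F n ((g⁻¹ : Gsub F n H) : (Fin n → F) ≃ₗ[F] (Fin n → F)) y)
section Aux

variable {F : Type} [Field F] [Fintype F] {n : ℕ}

lemma mem_Gsub {H : Submodule F (Fin n → F)} {g : (Fin n → F) ≃ₗ[F] (Fin n → F)} :
    g ∈ Gsub F n H ↔ (LinearEquiv.det g = 1 ∧ ∀ v ∈ H, g v = v) := Iff.rfl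

lemma smap_mul (g h : (Fin n → F) ≃ₗ[F] (Fin n → F)) (y : Submodule F (Fin n → F)) :
    smap F n (g * h) y = smap F n g (smap F n h y) := by
  simp only [smap, ← Submodule.map_comp]
  rfl

lemma smap_one (y : Submodule F (Fin n → F)) : smap F n 1 y = y := by
  simp only [smap]
  exact Submodule.map_id y

variable {H : Submodule F (Fin n → F)}

lemma G_fix (g : Gsub F n H) {v : Fin n → F} (hv : v ∈ H) :
    (g : (Fin n → F) ≃ₗ[F] (Fin n → F)) v = v := g.2.2 v hv

lemma G_symm_fix (g : Gsub F n H) {v : Fin n → F} (hv : v ∈ H) :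
    (g : (Fin n → F) ≃ₗ[F] (Fin n → F)).symm v = v := by
  have := (g⁻¹).2.2 v hv
  simpa using this

lemma smap_fix (g : Gsub F n H) {y : Submodule F (Fin n → F)} (hy : y ≤ H) :
    smap F n (g : (Fin n → F) ≃ₗ[F] (Fin n → F)) y = y := by
  ext v
  simp only [smap, Submodule.mem_map]
  constructor
  · rintro ⟨w, hw, rfl⟩
    rw [show ((g : (Fin n → F) ≃ₗ[F] (Fin n → F)) : (Fin n → F) →ₗ[F] (Fin n → F)) w
        = (g : (Fin n → F) ≃ₗ[F] (Fin n → F)) w from rfl, G_fix g (hy hw)]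
    exact hw
  · intro hv
    exact ⟨v, hv, G_fix g (hy hv)⟩

lemma inf_smap (g : Gsub F n H) (y : Submodule F (Fin n → F)) :
    H ⊓ smap F n (g : (Fin n → F) ≃ₗ[F] (Fin n → F)) y = H ⊓ y := by
  ext v
  simp only [Submodule.mem_inf, smap, Submodule.mem_map_equiv]
  constructor
  · rintro ⟨h1, h2⟩
    rw [G_symm_fix g h1] at h2
    exact ⟨h1, h2⟩
  · rintro ⟨h1, h2⟩
    refine ⟨h1, ?_⟩
    rw [G_symm_fix g h1]
    exact h2

lemma finrank_smap (g : (Fin n → F) ≃ₗ[F] (Fin n → F)) (y : Submodule F (Fin n → F)) :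
    finrank F (smap F n g y) = finrank F y :=
  LinearEquiv.finrank_map_eq g y

lemma smap_le_H_iff (g : Gsub F n H) {y : Submodule F (Fin n → F)} :
    smap F n (g : (Fin n → F) ≃ₗ[F] (Fin n → F)) y ≤ H ↔ y ≤ H := by
  constructor
  · intro h
    have h2 : smap F n ((g⁻¹ : Gsub F n H) : (Fin n → F) ≃ₗ[F] (Fin n → F))
        (smap F n (g : (Fin n → F) ≃ₗ[F] (Fin n → F)) y) = y := by
      rw [← smap_mul]
      have : ((g⁻¹ : Gsub F n H) : (Fin n → F) ≃ₗ[F] (Fin n → F)) *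
          (g : (Fin n → F) ≃ₗ[F] (Fin n → F)) = 1 := by
        rw [← Subgroup.coe_mul, inv_mul_cancel, Subgroup.coe_one]
      rw [this, smap_one]
    rw [← h2]
    rw [smap_fix (g⁻¹) h]
    exact h
  · intro h
    rw [smap_fix g h]
    exact h

end Aux
section Aux2
set_option linter.unusedSectionVars false

variable {F : Type} [Field F] [Fintype F] {n : ℕ} {H : Submodule F (Fin n → F)}

lemma sup_span_eq_top (hH : finrank F H + 1 = n) {v : Fin n → F} (hv : v ∉ H) :
    H ⊔ Submodule.span F {v} = ⊤ := by
  have hlt : H < H ⊔ Submodule.span F {v} := by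
    rw [left_lt_sup]
    intro hle
    exact hv (hle (Submodule.mem_span_singleton_self v))
  have h1 : finrank F H < finrank F (H ⊔ Submodule.span F {v} : Submodule F (Fin n → F)) :=
    Submodule.finrank_lt_finrank_of_lt hlt
  have h2 : finrank F (H ⊔ Submodule.span F {v} : Submodule F (Fin n → F)) ≤ n := by
    have := Submodule.finrank_le (H ⊔ Submodule.span F {v})
    rwa [Module.finrank_fin_fun] at this
  apply Submodule.eq_top_of_finrank_eq
  rw [Module.finrank_fin_fun]
  omega

lemma eq_inf_sup_span (hH : finrank F H + 1 = n) {z : Submodule F (Fin n → F)}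
    {v : Fin n → F} (hv : v ∈ z) (hvH : v ∉ H) :
    z = (H ⊓ z) ⊔ Submodule.span F {v} := by
  apply le_antisymm
  · intro w hw
    have hw2 : w ∈ H ⊔ Submodule.span F {v} := by
      rw [sup_span_eq_top hH hvH]; trivial
    rcases Submodule.mem_sup.1 hw2 with ⟨h, hh, s, hs, rfl⟩
    rcases Submodule.mem_span_singleton.1 hs with ⟨c, rfl⟩
    have hhz : h ∈ z := by
      have : (h + c • v) - c • v ∈ z := z.sub_mem hw (z.smul_mem c hv)
      simpa using this
    exact Submodule.add_mem _ (Submodule.mem_sup_left ⟨hh, hhz⟩) (Submodule.mem_sup_right hs)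
  · exact sup_le inf_le_right ((Submodule.span_singleton_le_iff_mem v z).2 hv)

lemma not_le_H_of_inf_lt {z : Submodule F (Fin n → F)}
    (hz : finrank F (H ⊓ z : Submodule F (Fin n → F)) < finrank F z) : ¬ z ≤ H := by
  intro hle
  rw [inf_eq_right.2 hle] at hz
  omega

/-- The key transitivity lemma: `G` acts transitively on the subspaces with a
given intersection with `H`, not contained in `H`. -/
lemma exists_G_smap (hH : finrank F H + 1 = n) {y z : Submodule F (Fin n → F)}
    (hy : ¬ y ≤ H) (hz : ¬ z ≤ H) (hyz : H ⊓ y = H ⊓ z) :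
    ∃ g : Gsub F n H, smap F n (g : (Fin n → F) ≃ₗ[F] (Fin n → F)) y = z := by
  obtain ⟨v, hvy, hvH⟩ := SetLike.not_le_iff_exists.1 hy
  obtain ⟨v', hv'z, hv'H⟩ := SetLike.not_le_iff_exists.1 hz
  -- decompose v' = h + c • v
  have hv'T : v' ∈ H ⊔ Submodule.span F {v} := by rw [sup_span_eq_top hH hvH]; trivial
  obtain ⟨h, hh, s, hs, hdec⟩ := Submodule.mem_sup.1 hv'T
  obtain ⟨c, rfl⟩ := Submodule.mem_span_singleton.1 hs
  have hc : c ≠ 0 := by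
    rintro rfl
    apply hv'H
    rw [← hdec]
    simpa using hh
  set v₂ : Fin n → F := c⁻¹ • v' with hv₂def
  have hv₂z : v₂ ∈ z := z.smul_mem _ hv'z
  have hd : v₂ - v ∈ H := by
    have : v₂ - v = c⁻¹ • h := by
      rw [hv₂def, ← hdec, smul_add, smul_smul, inv_mul_cancel₀ hc, one_smul]
      abel
    rw [this]
    exact H.smul_mem _ hh
  set d : Fin n → F := v₂ - v with hddef
  have hv₂ : v₂ = v + d := by rw [hddef]; abel
  have hv₂H : v₂ ∉ H := fun hmem => hvH (by
    have : v = v₂ - d := by rw [hddef]; abel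
    rw [this]; exact H.sub_mem hmem hd)
  -- construct φ with φ|_H = 0, φ v = 1
  have hQrank : finrank F ((Fin n → F) ⧸ H) = 1 := by
    have := Submodule.finrank_quotient_add_finrank H
    rw [Module.finrank_fin_fun] at this
    omega
  have hvb : H.mkQ v ≠ 0 := by
    rw [Submodule.mkQ_apply, Ne, Submodule.Quotient.mk_eq_zero]
    exact hvH
  set ε : F →ₗ[F] ((Fin n → F) ⧸ H) := LinearMap.toSpanSingleton F _ (H.mkQ v) with hε
  have hinj : Function.Injective ε := by
    rw [← LinearMap.ker_eq_bot]
    exact LinearMap.ker_toSpanSingleton F hvb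
  have hsurj : Function.Surjective ε := by
    rw [← LinearMap.range_eq_top, ← LinearMap.span_singleton_eq_range]
    apply Submodule.eq_top_of_finrank_eq
    rw [finrank_span_singleton hvb, hQrank]
  set e : F ≃ₗ[F] ((Fin n → F) ⧸ H) := LinearEquiv.ofBijective ε ⟨hinj, hsurj⟩ with he
  set φ : (Fin n → F) →ₗ[F] F := e.symm.toLinearMap ∘ₗ H.mkQ with hφ
  have hφH : ∀ w ∈ H, φ w = 0 := by
    intro w hw
    rw [hφ]
    simp only [LinearMap.coe_comp, Function.comp_apply, LinearEquiv.coe_coe]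
    rw [Submodule.mkQ_apply, (Submodule.Quotient.mk_eq_zero H).2 hw, map_zero]
  have hφv : φ v = 1 := by
    rw [hφ]
    simp only [LinearMap.coe_comp, Function.comp_apply, LinearEquiv.coe_coe]
    rw [LinearEquiv.symm_apply_eq]
    show H.mkQ v = ε 1
    rw [hε, LinearMap.toSpanSingleton_apply, one_smul]
  -- the linear map f w = φ w • d
  set f : (Fin n → F) →ₗ[F] (Fin n → F) := (LinearMap.toSpanSingleton F _ d) ∘ₗ φ with hf
  have hfapp : ∀ w, f w = φ w • d := fun w => rfl
  have hfd : f d = 0 := by rw [hfapp, hφH d hd, zero_smul]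
  have hff : ∀ w, f (f w) = 0 := by
    intro w
    rw [hfapp w, map_smul, hfd, smul_zero]
  have h1 : (LinearMap.id + f) ∘ₗ (LinearMap.id - f) = LinearMap.id := by
    refine LinearMap.ext fun w => ?_
    simp only [LinearMap.coe_comp, Function.comp_apply, LinearMap.add_apply,
      LinearMap.sub_apply, LinearMap.id_apply, map_sub, hff w]
    abel
  have h2 : (LinearMap.id - f) ∘ₗ (LinearMap.id + f) = LinearMap.id := by
    refine LinearMap.ext fun w => ?_
    simp only [LinearMap.coe_comp, Function.comp_apply, LinearMap.add_apply,
      LinearMap.sub_apply, LinearMap.id_apply, map_add, hff w]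
    abel
  set g0 : (Fin n → F) ≃ₗ[F] (Fin n → F) := LinearEquiv.ofLinear (LinearMap.id + f)
    (LinearMap.id - f) h1 h2 with hg0
  have hg0app : ∀ w, g0 w = w + f w := fun w => rfl
  -- determinant
  have hdet : LinearMap.det (g0 : (Fin n → F) →ₗ[F] (Fin n → F)) = 1 := by
    classical
    have hco : (g0 : (Fin n → F) →ₗ[F] (Fin n → F)) = LinearMap.id + f := rfl
    rw [hco]
    let b := Pi.basisFun F (Fin n)
    rw [← LinearMap.det_toMatrix b]
    have hmat : LinearMap.toMatrix b b (LinearMap.id + f)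
        = 1 + Matrix.replicateCol Unit d * Matrix.replicateRow Unit (fun j => φ (b j)) := by
      rw [map_add]
      congr 1
      · exact LinearMap.toMatrix_id (v₁ := b)
      · ext i j
        rw [LinearMap.toMatrix_apply, Pi.basisFun_repr, hfapp, Matrix.mul_apply]
        rw [Finset.sum_eq_single (default : Unit) (fun b _ hb => absurd (Subsingleton.elim b default) hb) (by simp)]
        rw [Matrix.replicateCol_apply, Matrix.replicateRow_apply, Pi.smul_apply, smul_eq_mul, mul_comm]
    rw [hmat, Matrix.det_one_add_replicateCol_mul_replicateRow]
    have hdot : dotProduct (fun j => φ (b j)) d = φ d := by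
      rw [LinearMap.pi_apply_eq_sum_univ φ d, dotProduct]
      apply Finset.sum_congr rfl
      intro i _
      rw [smul_eq_mul, mul_comm]
      congr 1
      · congr 1
        ext j
        simp [b, Pi.basisFun_apply, Pi.single_apply, eq_comm]
    rw [hdot, hφH d hd, add_zero]
  have hg0mem : g0 ∈ Gsub F n H := by
    refine ⟨?_, fun w hw => ?_⟩
    · apply Units.ext
      rw [LinearEquiv.coe_det, hdet, Units.val_one]
    · rw [hg0app, hfapp, hφH w hw, zero_smul, add_zero]
  refine ⟨⟨g0, hg0mem⟩, ?_⟩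
  -- compute the image
  have hyd : y = (H ⊓ y) ⊔ Submodule.span F {v} := eq_inf_sup_span hH hvy hvH
  have hzd : z = (H ⊓ z) ⊔ Submodule.span F {v₂} := eq_inf_sup_span hH hv₂z hv₂H
  have hgv : g0 v = v₂ := by rw [hg0app, hfapp, hφv, one_smul, hv₂]
  calc smap F n g0 y = smap F n g0 ((H ⊓ y) ⊔ Submodule.span F {v}) := by rw [← hyd]
    _ = smap F n g0 (H ⊓ y) ⊔ smap F n g0 (Submodule.span F {v}) := Submodule.map_sup _ _ _
    _ = (H ⊓ y) ⊔ Submodule.span F {v₂} := by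
        congr 1
        · exact smap_fix (⟨g0, hg0mem⟩ : Gsub F n H) inf_le_left
        · rw [smap, Submodule.map_span, Set.image_singleton]
          congr 1
          rw [show ((g0 : (Fin n → F) →ₗ[F] (Fin n → F)) v) = g0 v from rfl, hgv]
    _ = z := by rw [hyz, ← hzd]

end Aux2
section Aux3
set_option linter.unusedSectionVars false
open Classical

variable {F : Type} [Field F] [Fintype F] {n : ℕ} {H : Submodule F (Fin n → F)}
  [Fintype (Gsub F n H)]

lemma finite_submodule : Finite (Submodule F (Fin n → F)) :=
  Finite.of_injective (fun p : Submodule F (Fin n → F) => (p : Set (Fin n → F)))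
    SetLike.coe_injective

lemma coeff_ne_zero : ((Fintype.card F : ℂ) ^ (n - 1))⁻¹ ≠ 0 := by
  apply inv_ne_zero
  apply pow_ne_zero
  exact_mod_cast Fintype.card_ne_zero

lemma smap_inv_eq_iff (g : Gsub F n H) {y w : Submodule F (Fin n → F)} :
    smap F n ((g⁻¹ : Gsub F n H) : (Fin n → F) ≃ₗ[F] (Fin n → F)) w = y ↔
      smap F n (g : (Fin n → F) ≃ₗ[F] (Fin n → F)) y = w := by
  constructor
  · rintro rfl
    rw [← smap_mul, ← Subgroup.coe_mul, mul_inv_cancel, Subgroup.coe_one, smap_one]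
  · rintro rfl
    rw [← smap_mul, ← Subgroup.coe_mul, inv_mul_cancel, Subgroup.coe_one, smap_one]

/-- Canonical form of `echi` applied to a delta function. -/
lemma echi_delta_eq (χ : Gsub F n H →* ℂ) (y w : Submodule F (Fin n → F)) :
    echi F n H χ (delta F n y) w = ((Fintype.card F : ℂ) ^ (n - 1))⁻¹ *
      ∑ g : Gsub F n H,
        if smap F n (g : (Fin n → F) ≃ₗ[F] (Fin n → F)) y = w then χ g⁻¹ else 0 := by
  rw [echi]
  congr 1
  apply Finset.sum_congr rfl
  intro g _
  rw [delta]
  by_cases hc : smap F n (g : (Fin n → F) ≃ₗ[F] (Fin n → F)) y = w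
  · rw [if_pos hc, if_pos (smap_inv_eq_iff g |>.2 hc), mul_one]
  · rw [if_neg hc, if_neg (fun hh => hc (smap_inv_eq_iff g |>.1 hh)), mul_zero]

lemma chi_ne_zero (χ : Gsub F n H →* ℂ) (g : Gsub F n H) : χ g ≠ 0 := by
  intro h
  have : χ g * χ g⁻¹ = 1 := by rw [← map_mul, mul_inv_cancel, map_one]
  rw [h, zero_mul] at this
  exact zero_ne_one this

/-- Transport: if `g₀ y = z` then `e_χ δ_y = χ(g₀⁻¹) • e_χ δ_z`. -/
lemma echi_delta_transport (χ : Gsub F n H →* ℂ) {y z : Submodule F (Fin n → F)}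
    (g₀ : Gsub F n H) (hg₀ : smap F n (g₀ : (Fin n → F) ≃ₗ[F] (Fin n → F)) y = z) :
    echi F n H χ (delta F n y) = χ g₀⁻¹ • echi F n H χ (delta F n z) := by
  funext w
  rw [Pi.smul_apply, smul_eq_mul, echi_delta_eq, echi_delta_eq]
  rw [mul_left_comm]
  congr 1
  rw [Finset.mul_sum]
  apply Fintype.sum_equiv (Equiv.mulRight g₀⁻¹)
  intro g
  rw [show (Equiv.mulRight g₀⁻¹) g = g * g₀⁻¹ from rfl]
  have hz2 : smap F n ((g * g₀⁻¹ : Gsub F n H) : (Fin n → F) ≃ₗ[F] (Fin n → F)) z =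
      smap F n (g : (Fin n → F) ≃ₗ[F] (Fin n → F)) y := by
    rw [Subgroup.coe_mul, smap_mul, (smap_inv_eq_iff g₀).2 hg₀]
  rw [hz2]
  by_cases hc : smap F n (g : (Fin n → F) ≃ₗ[F] (Fin n → F)) y = w
  · rw [if_pos hc, if_pos hc, mul_inv_rev, inv_inv, map_mul, ← mul_assoc, ← map_mul,
      inv_mul_cancel, map_one, one_mul]
  · rw [if_neg hc, if_neg hc, mul_zero]

/-- Equivariance of `e_χ δ_y`. -/
lemma echi_delta_equivariant (χ : Gsub F n H →* ℂ) (y w : Submodule F (Fin n → F))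
    (h : Gsub F n H) :
    echi F n H χ (delta F n y)
        (smap F n ((h⁻¹ : Gsub F n H) : (Fin n → F) ≃ₗ[F] (Fin n → F)) w)
      = χ h * echi F n H χ (delta F n y) w := by
  rw [echi_delta_eq, echi_delta_eq, mul_left_comm]
  congr 1
  rw [Finset.mul_sum]
  apply Fintype.sum_equiv (Equiv.mulLeft h)
  intro g
  rw [show (Equiv.mulLeft h) g = h * g from rfl]
  have hcond : smap F n (g : (Fin n → F) ≃ₗ[F] (Fin n → F)) y =
      smap F n ((h⁻¹ : Gsub F n H) : (Fin n → F) ≃ₗ[F] (Fin n → F)) w ↔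
      smap F n ((h * g : Gsub F n H) : (Fin n → F) ≃ₗ[F] (Fin n → F)) y = w := by
    rw [Subgroup.coe_mul, smap_mul, ← smap_inv_eq_iff h, eq_comm]
  have hh1 : χ h * χ h⁻¹ = 1 := by rw [← map_mul, mul_inv_cancel, map_one]
  by_cases hc : smap F n ((h * g : Gsub F n H) : (Fin n → F) ≃ₗ[F] (Fin n → F)) y = w
  · rw [if_pos (hcond.2 hc), if_pos hc, mul_inv_rev, map_mul]
    linear_combination (-(χ g⁻¹)) * hh1
  · rw [if_neg (fun hh => hc (hcond.1 hh)), if_neg hc, mul_zero]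

/-- Vanishing: if some element of the stabilizer of `y` has `χ s ≠ 1`, `e_χ δ_y = 0`. -/
lemma echi_delta_eq_zero (χ : Gsub F n H →* ℂ) {y : Submodule F (Fin n → F)}
    (s : Gsub F n H) (hs : smap F n (s : (Fin n → F) ≃ₗ[F] (Fin n → F)) y = y)
    (hχs : χ s ≠ 1) : echi F n H χ (delta F n y) = 0 := by
  funext w
  rw [echi_delta_eq, Pi.zero_apply]
  apply mul_eq_zero_of_right
  set S := ∑ g : Gsub F n H,
    if smap F n (g : (Fin n → F) ≃ₗ[F] (Fin n → F)) y = w then χ g⁻¹ else 0 with hS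
  have key : S = χ s⁻¹ * S := by
    rw [hS, Finset.mul_sum]
    apply Fintype.sum_equiv (Equiv.mulRight s⁻¹)
    intro g
    rw [show (Equiv.mulRight s⁻¹) g = g * s⁻¹ from rfl]
    have hs' : smap F n ((s⁻¹ : Gsub F n H) : (Fin n → F) ≃ₗ[F] (Fin n → F)) y = y :=
      (smap_inv_eq_iff s).2 hs
    have hcond : smap F n ((g * s⁻¹ : Gsub F n H) : (Fin n → F) ≃ₗ[F] (Fin n → F)) y =
        smap F n (g : (Fin n → F) ≃ₗ[F] (Fin n → F)) y := by
      rw [Subgroup.coe_mul, smap_mul, hs']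
    rw [hcond]
    have hh1 : χ s * χ s⁻¹ = 1 := by rw [← map_mul, mul_inv_cancel, map_one]
    by_cases hc : smap F n (g : (Fin n → F) ≃ₗ[F] (Fin n → F)) y = w
    · rw [if_pos hc, if_pos hc, mul_inv_rev, inv_inv, map_mul, ← mul_assoc]
      rw [show χ s⁻¹ * χ s = 1 from by rw [mul_comm]; exact hh1, one_mul]
    · rw [if_neg hc, if_neg hc, mul_zero]
  have hχs' : χ s⁻¹ ≠ 1 := by
    intro h1
    apply hχs
    have : χ s * χ s⁻¹ = 1 := by rw [← map_mul, mul_inv_cancel, map_one]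
    rw [h1, mul_one] at this
    exact this
  have : (1 - χ s⁻¹) * S = 0 := by rw [sub_mul, one_mul, ← key, sub_self]
  rcases mul_eq_zero.1 this with h | h
  · exact absurd (by linear_combination -h : χ s⁻¹ = 1) hχs'
  · exact h

/-- Nonvanishing at `y` itself when `χ` is trivial on the stabilizer. -/
lemma echi_delta_self_ne_zero (χ : Gsub F n H →* ℂ) {y : Submodule F (Fin n → F)}
    (htriv : ∀ s : Gsub F n H, smap F n (s : (Fin n → F) ≃ₗ[F] (Fin n → F)) y = y → χ s = 1) :
    echi F n H χ (delta F n y) y ≠ 0 := by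
  rw [echi_delta_eq]
  apply mul_ne_zero coeff_ne_zero
  have : ∑ g : Gsub F n H,
      (if smap F n (g : (Fin n → F) ≃ₗ[F] (Fin n → F)) y = y then χ g⁻¹ else 0)
      = ∑ g : Gsub F n H,
      (if smap F n (g : (Fin n → F) ≃ₗ[F] (Fin n → F)) y = y then (1 : ℂ) else 0) := by
    apply Finset.sum_congr rfl
    intro g _
    by_cases hc : smap F n (g : (Fin n → F) ≃ₗ[F] (Fin n → F)) y = y
    · rw [if_pos hc, if_pos hc]
      apply htriv
      rw [smap_inv_eq_iff]
      exact hc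
    · rw [if_neg hc, if_neg hc]
  rw [this, Finset.sum_boole]
  have hne : (Finset.univ.filter (fun g : Gsub F n H =>
      smap F n (g : (Fin n → F) ≃ₗ[F] (Fin n → F)) y = y)).Nonempty := by
    refine ⟨1, Finset.mem_filter.2 ⟨Finset.mem_univ _, ?_⟩⟩
    rw [Subgroup.coe_one, smap_one]
  simpa using Finset.card_ne_zero_of_mem hne.choose_spec

end Aux3
section Aux4
set_option linter.unusedSectionVars false
open Classical

variable {F : Type} [Field F] [Fintype F] {n : ℕ} {H : Submodule F (Fin n → F)}
  [Fintype (Gsub F n H)]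

/-- Support: a nonzero value of `e_χ δ_y` only occurs on the orbit of `y`. -/
lemma exists_of_echi_delta_ne_zero (χ : Gsub F n H →* ℂ) {y w : Submodule F (Fin n → F)}
    (hne : echi F n H χ (delta F n y) w ≠ 0) :
    ∃ g : Gsub F n H, smap F n (g : (Fin n → F) ≃ₗ[F] (Fin n → F)) y = w := by
  rw [echi_delta_eq] at hne
  have hsum : (∑ g : Gsub F n H,
      if smap F n (g : (Fin n → F) ≃ₗ[F] (Fin n → F)) y = w then χ g⁻¹ else 0) ≠ 0 :=
    fun h => hne (by rw [h, mul_zero])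
  obtain ⟨g, _, hg⟩ := Finset.exists_ne_zero_of_sum_ne_zero hsum
  by_cases hc : smap F n (g : (Fin n → F) ≃ₗ[F] (Fin n → F)) y = w
  · exact ⟨g, hc⟩
  · exact absurd (if_neg hc) hg

/-- `e_χ δ_y ≠ 0` iff `χ` is trivial on the stabilizer of `y`. -/
lemma echi_delta_ne_zero_iff (χ : Gsub F n H →* ℂ) (y : Submodule F (Fin n → F)) :
    echi F n H χ (delta F n y) ≠ 0 ↔
      ∀ s : Gsub F n H, smap F n (s : (Fin n → F) ≃ₗ[F] (Fin n → F)) y = y → χ s = 1 := by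
  constructor
  · intro hne s hs
    by_contra hχ
    exact hne (echi_delta_eq_zero χ s hs hχ)
  · intro htriv
    intro h0
    apply echi_delta_self_ne_zero χ htriv
    rw [h0, Pi.zero_apply]

/-- Stabilizer monotonicity. -/
lemma smap_eq_of_le (hH : finrank F H + 1 = n) (g : Gsub F n H)
    {y z : Submodule F (Fin n → F)} (hyz : y ≤ z) (hy : ¬ y ≤ H)
    (hgy : smap F n (g : (Fin n → F) ≃ₗ[F] (Fin n → F)) y = y) :
    smap F n (g : (Fin n → F) ≃ₗ[F] (Fin n → F)) z = z := by
  obtain ⟨v, hvy, hvH⟩ := SetLike.not_le_iff_exists.1 hy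
  have hle : smap F n (g : (Fin n → F) ≃ₗ[F] (Fin n → F)) z ≤ z := by
    rintro _ ⟨w, hw, rfl⟩
    have hwT : w ∈ H ⊔ Submodule.span F {v} := by rw [sup_span_eq_top hH hvH]; trivial
    obtain ⟨h, hh, s, hs, rfl⟩ := Submodule.mem_sup.1 hwT
    obtain ⟨c, rfl⟩ := Submodule.mem_span_singleton.1 hs
    have hgv : (g : (Fin n → F) ≃ₗ[F] (Fin n → F)) v ∈ y := by
      rw [← hgy]; exact ⟨v, hvy, rfl⟩
    have h1 : ((g : (Fin n → F) ≃ₗ[F] (Fin n → F)) : (Fin n → F) →ₗ[F] (Fin n → F)) (h + c • v)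
        = h + c • (g : (Fin n → F) ≃ₗ[F] (Fin n → F)) v := by
      rw [show ∀ u, ((g : (Fin n → F) ≃ₗ[F] (Fin n → F)) : (Fin n → F) →ₗ[F] (Fin n → F)) u
          = (g : (Fin n → F) ≃ₗ[F] (Fin n → F)) u from fun _ => rfl]
      rw [map_add, map_smul, G_fix g hh]
    rw [h1]
    have hhz : h ∈ z := by
      have h2 : (h + c • v) - c • v ∈ z := z.sub_mem hw (z.smul_mem c (hyz hvy))
      simpa using h2
    exact z.add_mem hhz (z.smul_mem c (hyz hgv))
  apply Submodule.eq_of_le_of_finrank_le hle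
  rw [finrank_smap]

lemma inf_sup_u {u y : Submodule F (Fin n → F)} (hy : y ≤ H) (hu : H ⊓ u = ⊥) :
    H ⊓ (y ⊔ u) = y := by
  apply le_antisymm
  · rintro v ⟨hvH, hvyu⟩
    obtain ⟨w, hw, s, hs, rfl⟩ := Submodule.mem_sup.1 hvyu
    have hsH : s ∈ H := by
      have : (w + s) - w ∈ H := H.sub_mem hvH (hy hw)
      simpa using this
    have : s ∈ H ⊓ u := ⟨hsH, hs⟩
    rw [hu] at this
    rw [show s = 0 from this, add_zero]
    exact hw
  · exact le_inf hy le_sup_left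

end Aux4
/-- (i) `e_χ y` is a nonzero multiple of `e_χ z` when `H∩y = H∩z`;
(ii) if `y ⊆ z` and `e_χ z ≠ 0` then `e_χ y ≠ 0`; (iii) the nonzero vectors
among the `e_χ(y ∨ u)`, `y ∈ P̃_{i,j,0}`, form a basis of `M(χ)_{i,j}`. -/
theorem echi_basis (F : Type) [Field F] [Fintype F] (a b : ℕ)
    (x H : Submodule F (Fin (a + b + 1) → F))
    (hx : finrank F x = a) (hH : finrank F H = a + b) (hxH : x ≤ H)
    [Fintype (Gsub F (a + b + 1) H)]
    (u : Submodule F (Fin (a + b + 1) → F))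
    (hu : finrank F ↥(x ⊓ u) = 0 ∧ finrank F ↥(H ⊓ u) = 0 ∧ finrank F u = 1)
    (χ : Gsub F (a + b + 1) H →* ℂ) :
    (∀ y z : Submodule F (Fin (a + b + 1) → F), ¬y ≤ H → ¬z ≤ H → H ⊓ y = H ⊓ z →
      ∃ c : ℂ, c ≠ 0 ∧
        echi F (a + b + 1) H χ (delta F (a + b + 1) y)
          = c • echi F (a + b + 1) H χ (delta F (a + b + 1) z))
    ∧ (∀ y z : Submodule F (Fin (a + b + 1) → F), ¬y ≤ H → ¬z ≤ H → y ≤ z →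
        echi F (a + b + 1) H χ (delta F (a + b + 1) z) ≠ 0 →
        echi F (a + b + 1) H χ (delta F (a + b + 1) y) ≠ 0)
    ∧ (∀ i j : ℕ, i ≤ a → j ≤ b →
        LinearIndependent ℂ
          (fun y : {y : Submodule F (Fin (a + b + 1) → F) //
              (finrank F ↥(x ⊓ y) = i ∧ finrank F ↥(H ⊓ y) = i + j ∧
                finrank F y = i + j) ∧
              echi F (a + b + 1) H χ (delta F (a + b + 1) (y ⊔ u)) ≠ 0} =>
            echi F (a + b + 1) H χ (delta F (a + b + 1) (y.1 ⊔ u)))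
        ∧ Submodule.span ℂ
            (Set.range (fun y : {y : Submodule F (Fin (a + b + 1) → F) //
              (finrank F ↥(x ⊓ y) = i ∧ finrank F ↥(H ⊓ y) = i + j ∧
                finrank F y = i + j) ∧
              echi F (a + b + 1) H χ (delta F (a + b + 1) (y ⊔ u)) ≠ 0} =>
              echi F (a + b + 1) H χ (delta F (a + b + 1) (y.1 ⊔ u))))
          = Mcomp F (a + b + 1) H χ
              {y | finrank F ↥(x ⊓ y) = i ∧ finrank F ↥(H ⊓ y) = i + j ∧
                finrank F y = i + j + 1}) := by
  classical
  have hH' : finrank F H + 1 = a + b + 1 := by rw [hH]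
  haveI hfinsub : Finite (Submodule F (Fin (a + b + 1) → F)) := finite_submodule
  have hHu : H ⊓ u = ⊥ := Submodule.finrank_eq_zero.1 hu.2.1
  have huH : ¬ u ≤ H := by
    intro hle
    have h1 : H ⊓ u = u := inf_eq_right.2 hle
    rw [hHu] at h1
    rw [← h1] at hu
    simp at hu
  -- x ⊓ w = x ⊓ (H ⊓ w)
  have hxw : ∀ w : Submodule F (Fin (a + b + 1) → F), x ⊓ w = x ⊓ (H ⊓ w) := fun w =>
    le_antisymm (le_inf inf_le_left (le_inf (le_trans inf_le_left hxH) inf_le_right))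
      (le_inf inf_le_left (le_trans inf_le_right inf_le_right))
  -- finrank (y ⊔ u) = finrank y + 1 for y ≤ H
  have hfr : ∀ y : Submodule F (Fin (a + b + 1) → F), y ≤ H →
      finrank F ((y ⊔ u : Submodule F (Fin (a + b + 1) → F))) = finrank F y + 1 := by
    intro y hy
    have h1 := Submodule.finrank_sup_add_finrank_inf_eq y u
    have h2 : y ⊓ u = ⊥ := by
      rw [← le_bot_iff, ← hHu]
      exact inf_le_inf_right u hy
    rw [h2, hu.2.2] at h1
    simpa using h1
  have hsupnH : ∀ y : Submodule F (Fin (a + b + 1) → F), ¬ (y ⊔ u) ≤ H := fun y hle =>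
    huH (le_trans le_sup_right hle)
  refine ⟨?_, ?_, ?_⟩
  · -- part (i)
    intro y z hy hz hyz
    obtain ⟨g₀, hg₀⟩ := exists_G_smap hH' hy hz hyz
    exact ⟨χ g₀⁻¹, chi_ne_zero χ _, echi_delta_transport χ g₀ hg₀⟩
  · -- part (ii)
    intro y z hy hz hyz hne
    rw [echi_delta_ne_zero_iff] at hne ⊢
    intro s hs
    exact hne s (smap_eq_of_le hH' s hyz hy hs)
  · -- part (iii)
    intro i j hi hj
    -- support lemma
    have hsupp : ∀ y : Submodule F (Fin (a + b + 1) → F), y ≤ H →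
        ∀ w, echi F (a + b + 1) H χ (delta F (a + b + 1) (y ⊔ u)) w ≠ 0 →
        H ⊓ w = y ∧ ¬ w ≤ H ∧ finrank F w = finrank F y + 1 ∧ x ⊓ w = x ⊓ y := by
      intro y hy w hne
      obtain ⟨g, hg⟩ := exists_of_echi_delta_ne_zero χ hne
      have h1 : H ⊓ w = y := by rw [← hg, inf_smap, inf_sup_u hy hHu]
      refine ⟨h1, ?_, ?_, ?_⟩
      · rw [← hg, smap_le_H_iff]
        exact hsupnH y
      · rw [← hg, finrank_smap, hfr y hy]
      · rw [hxw w, h1]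
    -- conditions imply y ≤ H
    have hcondH : ∀ y : Submodule F (Fin (a + b + 1) → F),
        finrank F ↥(H ⊓ y) = i + j → finrank F y = i + j → y ≤ H := by
      intro y h1 h2
      have h3 : H ⊓ y = y :=
        Submodule.eq_of_le_of_finrank_le inf_le_right (by rw [h1, h2])
      rw [← h3]
      exact inf_le_left
    haveI : Fintype {y : Submodule F (Fin (a + b + 1) → F) //
        (finrank F ↥(x ⊓ y) = i ∧ finrank F ↥(H ⊓ y) = i + j ∧
          finrank F y = i + j) ∧
        echi F (a + b + 1) H χ (delta F (a + b + 1) (y ⊔ u)) ≠ 0} := Fintype.ofFinite _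
    -- membership of the echi vectors' support in S
    have hES : ∀ y : Submodule F (Fin (a + b + 1) → F),
        (finrank F ↥(x ⊓ y) = i ∧ finrank F ↥(H ⊓ y) = i + j ∧ finrank F y = i + j) →
        ∀ w, echi F (a + b + 1) H χ (delta F (a + b + 1) (y ⊔ u)) w ≠ 0 →
        (finrank F ↥(x ⊓ w) = i ∧ finrank F ↥(H ⊓ w) = i + j ∧
          finrank F w = i + j + 1) := by
      intro y hy w hne
      have hyH : y ≤ H := hcondH y hy.2.1 hy.2.2
      obtain ⟨h1, _, h3, h4⟩ := hsupp y hyH w hne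
      refine ⟨by rw [h4]; exact hy.1, by rw [h1]; exact hy.2.2, by rw [h3, hy.2.2]⟩
    constructor
    · -- linear independence
      rw [Fintype.linearIndependent_iff]
      intro c hsum i₀
      obtain ⟨w, hw⟩ : ∃ w, echi F (a + b + 1) H χ (delta F (a + b + 1) (i₀.1 ⊔ u)) w ≠ 0 := by
        have := i₀.2.2
        rw [Function.ne_iff] at this
        simpa using this
      have heval := congrFun hsum w
      rw [Finset.sum_apply] at heval
      rw [Finset.sum_eq_single i₀] at heval
      · rw [Pi.smul_apply, smul_eq_mul] at heval
        rcases mul_eq_zero.1 heval with h | h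
        · exact h
        · exact absurd h hw
      · intro y _ hyne
        rw [Pi.smul_apply, smul_eq_mul]
        by_cases hE : echi F (a + b + 1) H χ (delta F (a + b + 1) (y.1 ⊔ u)) w = 0
        · rw [hE, mul_zero]
        · exfalso
          apply hyne
          apply Subtype.ext
          have e1 := (hsupp y.1 (hcondH y.1 y.2.1.2.1 y.2.1.2.2) w hE).1
          have e2 := (hsupp i₀.1 (hcondH i₀.1 i₀.2.1.2.1 i₀.2.1.2.2) w hw).1
          rw [← e1, ← e2]
      · intro habs
        exact absurd (Finset.mem_univ i₀) habs
    · -- span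
      apply le_antisymm
      · rw [Submodule.span_le]
        rintro v ⟨y, rfl⟩
        refine ⟨?_, ?_⟩
        · intro w hwS
          by_contra hne
          exact hwS (hES y.1 y.2.1 w hne)
        · intro g w
          exact echi_delta_equivariant χ (y.1 ⊔ u) w g
      · intro v hv
        obtain ⟨hv1, hv2⟩ := hv
        have hveq : v = ∑ y : {y : Submodule F (Fin (a + b + 1) → F) //
            (finrank F ↥(x ⊓ y) = i ∧ finrank F ↥(H ⊓ y) = i + j ∧
              finrank F y = i + j) ∧
            echi F (a + b + 1) H χ (delta F (a + b + 1) (y ⊔ u)) ≠ 0},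
            (v (y.1 ⊔ u) *
              (echi F (a + b + 1) H χ (delta F (a + b + 1) (y.1 ⊔ u)) (y.1 ⊔ u))⁻¹) •
              echi F (a + b + 1) H χ (delta F (a + b + 1) (y.1 ⊔ u)) := by
          funext w
          rw [Finset.sum_apply]
          by_cases hwS : (finrank F ↥(x ⊓ w) = i ∧ finrank F ↥(H ⊓ w) = i + j ∧
              finrank F w = i + j + 1)
          · -- w in S
            set y₀ := H ⊓ w with hy₀def
            have hy₀H : y₀ ≤ H := inf_le_left
            have hwnH : ¬ w ≤ H := not_le_H_of_inf_lt (by rw [hwS.2.1, hwS.2.2]; omega)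
            have hinf : H ⊓ (y₀ ⊔ u) = H ⊓ w := by rw [inf_sup_u hy₀H hHu]
            obtain ⟨g, hg⟩ := exists_G_smap hH' (hsupnH y₀) hwnH hinf
            have hvw : v w = χ g⁻¹ * v (y₀ ⊔ u) := by
              have h5 := hv2 g⁻¹ (y₀ ⊔ u)
              rw [inv_inv] at h5
              rw [← hg]
              exact h5
            by_cases hv0 : v (y₀ ⊔ u) = 0
            · rw [hvw, hv0, mul_zero]
              symm
              apply Finset.sum_eq_zero
              intro y _
              rw [Pi.smul_apply, smul_eq_mul]
              by_cases hE : echi F (a + b + 1) H χ (delta F (a + b + 1) (y.1 ⊔ u)) w = 0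
              · rw [hE, mul_zero]
              · have e1 := (hsupp y.1 (hcondH y.1 y.2.1.2.1 y.2.1.2.2) w hE).1
                rw [← hy₀def] at e1
                have e2 : v (y.1 ⊔ u) = 0 := by rw [← e1]; exact hv0
                rw [e2, zero_mul, zero_mul]
            · -- y₀ gives a member of the index type
              have htriv : ∀ s : Gsub F (a + b + 1) H,
                  smap F (a + b + 1) (s : (Fin (a + b + 1) → F) ≃ₗ[F] (Fin (a + b + 1) → F))
                    (y₀ ⊔ u) = y₀ ⊔ u → χ s = 1 := by
                intro s hs
                have h5 := hv2 s⁻¹ (y₀ ⊔ u)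
                rw [inv_inv, hs] at h5
                have h6 : χ s⁻¹ = 1 := by
                  have h7 : (χ s⁻¹ - 1) * v (y₀ ⊔ u) = 0 := by linear_combination -h5
                  rcases mul_eq_zero.1 h7 with h | h
                  · linear_combination h
                  · exact absurd h hv0
                have h8 : χ s * χ s⁻¹ = 1 := by rw [← map_mul, mul_inv_cancel, map_one]
                rw [h6, mul_one] at h8
                exact h8
              have hEne : echi F (a + b + 1) H χ (delta F (a + b + 1) (y₀ ⊔ u)) ≠ 0 :=
                (echi_delta_ne_zero_iff χ (y₀ ⊔ u)).2 htriv
              have hEself :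
                  echi F (a + b + 1) H χ (delta F (a + b + 1) (y₀ ⊔ u)) (y₀ ⊔ u) ≠ 0 :=
                echi_delta_self_ne_zero χ htriv
              have hy₀mem : (finrank F ↥(x ⊓ y₀) = i ∧ finrank F ↥(H ⊓ y₀) = i + j ∧
                  finrank F y₀ = i + j) := by
                refine ⟨?_, ?_, ?_⟩
                · rw [hy₀def, ← hxw w]
                  exact hwS.1
                · rw [inf_eq_right.2 hy₀H]
                  exact hwS.2.1
                · exact hwS.2.1
              rw [Finset.sum_eq_single (⟨y₀, hy₀mem, hEne⟩ : {y : Submodule F (Fin (a + b + 1) → F) //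
                  (finrank F ↥(x ⊓ y) = i ∧ finrank F ↥(H ⊓ y) = i + j ∧
                    finrank F y = i + j) ∧
                  echi F (a + b + 1) H χ (delta F (a + b + 1) (y ⊔ u)) ≠ 0})]
              · rw [Pi.smul_apply, smul_eq_mul]
                have hEw : echi F (a + b + 1) H χ (delta F (a + b + 1) (y₀ ⊔ u)) w
                    = χ g⁻¹ * echi F (a + b + 1) H χ (delta F (a + b + 1) (y₀ ⊔ u)) (y₀ ⊔ u) := by
                  have h9 := echi_delta_equivariant χ (y₀ ⊔ u) (y₀ ⊔ u) g⁻¹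
                  rw [inv_inv, hg] at h9
                  exact h9
                rw [hvw, hEw]
                have h10 : v (y₀ ⊔ u) *
                    (echi F (a + b + 1) H χ (delta F (a + b + 1) (y₀ ⊔ u)) (y₀ ⊔ u))⁻¹ *
                    (χ g⁻¹ * echi F (a + b + 1) H χ (delta F (a + b + 1) (y₀ ⊔ u)) (y₀ ⊔ u))
                    = χ g⁻¹ * (v (y₀ ⊔ u) *
                      ((echi F (a + b + 1) H χ (delta F (a + b + 1) (y₀ ⊔ u)) (y₀ ⊔ u))⁻¹ *
                       echi F (a + b + 1) H χ (delta F (a + b + 1) (y₀ ⊔ u)) (y₀ ⊔ u))) := by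
                  ring
                rw [h10, inv_mul_cancel₀ hEself, mul_one]
              · intro y _ hyne
                rw [Pi.smul_apply, smul_eq_mul]
                by_cases hE : echi F (a + b + 1) H χ (delta F (a + b + 1) (y.1 ⊔ u)) w = 0
                · rw [hE, mul_zero]
                · exfalso
                  apply hyne
                  apply Subtype.ext
                  have e1 := (hsupp y.1 (hcondH y.1 y.2.1.2.1 y.2.1.2.2) w hE).1
                  rw [← hy₀def] at e1
                  exact e1.symm
              · intro habs
                exact absurd (Finset.mem_univ _) habs
          · -- w not in S
            rw [hv1 w hwS]
            symm
            apply Finset.sum_eq_zero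
            intro y _
            rw [Pi.smul_apply, smul_eq_mul]
            by_cases hE : echi F (a + b + 1) H χ (delta F (a + b + 1) (y.1 ⊔ u)) w = 0
            · rw [hE, mul_zero]
            · exact absurd (hES y.1 y.2.1 w hE) hwS
        rw [hveq]
        exact Submodule.sum_mem _ fun y _ =>
          Submodule.smul_mem _ _ (Submodule.subset_span ⟨y, rfl⟩)
end

section
/- The matrix R̃₃ maps ℂP̃₀ bijectively onto M(1_G). Moreover, identifying ℂP(x,H) with ℂP̃₀ and letting L₁, L₂, R₁, R₂, E*_{i,j} be the matrices attached to P(x,H) with respect to x, the following identities hold on ℂP(x,H) for all 0 ≤ i ≤ a and 0 ≤ j ≤ b: L̃₁R̃₃ = R̃₃L₁; L̃₂R̃₃ = R̃₃L₂; L̃₃R̃₃E*_{i,j} = q^{a+b−i−j} E*_{i,j}; R̃₁R̃₃ = q R̃₃R₁; R̃₂R̃₃ = q R̃₃R₂; R̃₃R̃₃ = 0; Ẽ*_{i,j,0}R̃₃ = 0; Ẽ*_{i,j,1}R̃₃ = R̃₃E*_{i,j}. -/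
open Module

/-- The q-Pochhammer symbol `(q;q)_n = ∏_{ℓ=0}^{n-1} (1 - q^ℓ)`. -/
noncomputable def qPoch (q : ℂ) (n : ℕ) : ℂ := ∏ l ∈ Finset.range n, (1 - q ^ l)

/-- The q-Pochhammer symbol with an integer index (junk value for negative index). -/
noncomputable def qPochZ (q : ℂ) (n : ℤ) : ℂ := qPoch q n.toNat

/-- The Gaussian binomial coefficient `[m, n]_q`, with the convention that it
vanishes unless `0 ≤ n ≤ m`. -/
noncomputable def qGauss (q : ℂ) (m n : ℤ) : ℂ :=
  if 0 ≤ n ∧ n ≤ m then qPoch q m.toNat / (qPoch q n.toNat * qPoch q (m - n).toNat) else 0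

section Twisted

variable (F : Type) [Field F] [Fintype F] (n : ℕ)

/-- Membership of `y` in `P̃_{i,j,k}` (with respect to `x ⊆ H`). -/
def PtMem (x H : Submodule F (Fin n → F)) (i j k : ℤ) (y : Submodule F (Fin n → F)) : Prop :=
  (finrank F ↥(x ⊓ y) : ℤ) = i ∧ (finrank F ↥(H ⊓ y) : ℤ) = i + j ∧
    (finrank F y : ℤ) = i + j + k

open Classical in
/-- The diagonal matrix `Ẽ*_{i,j,k}`. -/
noncomputable def EstarT (x H : Submodule F (Fin n → F)) (i j k : ℤ) :
    Matrix (Submodule F (Fin n → F)) (Submodule F (Fin n → F)) ℂ :=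
  Matrix.diagonal fun y => if PtMem F n x H i j k y then 1 else 0

open Classical in
/-- The lowering matrix `L̃₁`. -/
noncomputable def LoneT (x H : Submodule F (Fin n → F)) :
    Matrix (Submodule F (Fin n → F)) (Submodule F (Fin n → F)) ℂ :=
  fun y z => if y ≤ z ∧ finrank F y + 1 = finrank F z ∧
    finrank F ↥(x ⊓ y) + 1 = finrank F ↥(x ⊓ z) ∧
    finrank F ↥(H ⊓ y) + 1 = finrank F ↥(H ⊓ z) then 1 else 0

open Classical in
/-- The lowering matrix `L̃₂`. -/
noncomputable def LtwoT (x H : Submodule F (Fin n → F)) :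
    Matrix (Submodule F (Fin n → F)) (Submodule F (Fin n → F)) ℂ :=
  fun y z => if y ≤ z ∧ finrank F y + 1 = finrank F z ∧
    finrank F ↥(x ⊓ y) = finrank F ↥(x ⊓ z) ∧
    finrank F ↥(H ⊓ y) + 1 = finrank F ↥(H ⊓ z) then 1 else 0

open Classical in
/-- The lowering matrix `L̃₃`. -/
noncomputable def LthreeT (x H : Submodule F (Fin n → F)) :
    Matrix (Submodule F (Fin n → F)) (Submodule F (Fin n → F)) ℂ :=
  fun y z => if y ≤ z ∧ finrank F y + 1 = finrank F z ∧
    finrank F ↥(x ⊓ y) = finrank F ↥(x ⊓ z) ∧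
    finrank F ↥(H ⊓ y) = finrank F ↥(H ⊓ z) then 1 else 0

open Classical in
/-- The raising matrix `R̃₁`. -/
noncomputable def RoneT (x H : Submodule F (Fin n → F)) :
    Matrix (Submodule F (Fin n → F)) (Submodule F (Fin n → F)) ℂ :=
  fun y z => if z ≤ y ∧ finrank F z + 1 = finrank F y ∧
    finrank F ↥(x ⊓ z) + 1 = finrank F ↥(x ⊓ y) ∧
    finrank F ↥(H ⊓ z) + 1 = finrank F ↥(H ⊓ y) then 1 else 0

open Classical in
/-- The raising matrix `R̃₂`. -/
noncomputable def RtwoT (x H : Submodule F (Fin n → F)) :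
    Matrix (Submodule F (Fin n → F)) (Submodule F (Fin n → F)) ℂ :=
  fun y z => if z ≤ y ∧ finrank F z + 1 = finrank F y ∧
    finrank F ↥(x ⊓ z) = finrank F ↥(x ⊓ y) ∧
    finrank F ↥(H ⊓ z) + 1 = finrank F ↥(H ⊓ y) then 1 else 0

open Classical in
/-- The raising matrix `R̃₃`. -/
noncomputable def RthreeT (x H : Submodule F (Fin n → F)) :
    Matrix (Submodule F (Fin n → F)) (Submodule F (Fin n → F)) ℂ :=
  fun y z => if z ≤ y ∧ finrank F z + 1 = finrank F y ∧
    finrank F ↥(x ⊓ z) = finrank F ↥(x ⊓ y) ∧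
    finrank F ↥(H ⊓ z) = finrank F ↥(H ⊓ y) then 1 else 0

open Classical in
/-- The diagonal matrix `E*_{i,j}` of `P(x', H')`, viewed inside `Mat_{P̃}(ℂ)`
(supported on the subspaces of `H'`). -/
noncomputable def EstarRel (x' H' : Submodule F (Fin n → F)) (i j : ℤ) :
    Matrix (Submodule F (Fin n → F)) (Submodule F (Fin n → F)) ℂ :=
  Matrix.diagonal fun y => if y ≤ H' ∧ (finrank F ↥(x' ⊓ y) : ℤ) = i ∧
    (finrank F y : ℤ) = i + j then 1 else 0

open Classical in
/-- The lowering matrix `L₁` of `P(x', H')`, viewed inside `Mat_{P̃}(ℂ)`. -/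
noncomputable def LoneRel (x' H' : Submodule F (Fin n → F)) :
    Matrix (Submodule F (Fin n → F)) (Submodule F (Fin n → F)) ℂ :=
  fun y z => if z ≤ H' ∧ y ≤ z ∧ finrank F y + 1 = finrank F z ∧
    finrank F ↥(x' ⊓ y) + 1 = finrank F ↥(x' ⊓ z) then 1 else 0

open Classical in
/-- The lowering matrix `L₂` of `P(x', H')`, viewed inside `Mat_{P̃}(ℂ)`. -/
noncomputable def LtwoRel (x' H' : Submodule F (Fin n → F)) :
    Matrix (Submodule F (Fin n → F)) (Submodule F (Fin n → F)) ℂ :=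
  fun y z => if z ≤ H' ∧ y ≤ z ∧ finrank F y + 1 = finrank F z ∧
    finrank F ↥(x' ⊓ y) = finrank F ↥(x' ⊓ z) then 1 else 0

open Classical in
/-- The raising matrix `R₁` of `P(x', H')`, viewed inside `Mat_{P̃}(ℂ)`. -/
noncomputable def RoneRel (x' H' : Submodule F (Fin n → F)) :
    Matrix (Submodule F (Fin n → F)) (Submodule F (Fin n → F)) ℂ :=
  fun y z => if y ≤ H' ∧ z ≤ y ∧ finrank F z + 1 = finrank F y ∧
    finrank F ↥(x' ⊓ z) + 1 = finrank F ↥(x' ⊓ y) then 1 else 0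

open Classical in
/-- The raising matrix `R₂` of `P(x', H')`, viewed inside `Mat_{P̃}(ℂ)`. -/
noncomputable def RtwoRel (x' H' : Submodule F (Fin n → F)) :
    Matrix (Submodule F (Fin n → F)) (Submodule F (Fin n → F)) ℂ :=
  fun y z => if y ≤ H' ∧ z ≤ y ∧ finrank F z + 1 = finrank F y ∧
    finrank F ↥(x' ⊓ z) = finrank F ↥(x' ⊓ y) then 1 else 0

end Twisted

section GroupPart

variable (F : Type) [Field F] [Fintype F] (n : ℕ)

open Classical in
/-- The linear map `Θ_χ : ℂP̃₀ → ℂP̃₁`, `Θ_χ y = e_χ(y ∨ u)`, as a matrix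
(extended by zero on the basis vectors outside `ℂP̃₀`). -/
noncomputable def Theta (H : Submodule F (Fin n → F)) [Fintype (Gsub F n H)]
    (χ : Gsub F n H →* ℂ) (u : Submodule F (Fin n → F)) :
    Matrix (Submodule F (Fin n → F)) (Submodule F (Fin n → F)) ℂ :=
  fun z y => if y ≤ H then echi F n H χ (delta F n (y ⊔ u)) z else 0

end GroupPart

set_option linter.unusedSectionVars false

section Prelim
variable {F : Type} [Field F] [Fintype F] {n : ℕ}

lemma frV : finrank F (Fin n → F) = n := by simp [Module.finrank_pi]

lemma inf_rank {H : Submodule F (Fin n → F)} (hH : finrank F H + 1 = n)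
    {y : Submodule F (Fin n → F)} (hy : ¬ y ≤ H) :
    finrank F ↥(H ⊓ y) + 1 = finrank F y := by
  have hlt : H < H ⊔ y := lt_of_le_of_ne le_sup_left (by
    intro h; exact hy (le_sup_right.trans h.ge))
  have h1 : finrank F ↥H < finrank F ↥(H ⊔ y) := Submodule.finrank_lt_finrank_of_lt hlt
  have h2 : finrank F ↥(H ⊔ y) ≤ n := by
    have := Submodule.finrank_le (H ⊔ y)
    rwa [frV] at this
  have h3 : finrank F ↥(H ⊔ y) = n := by omega
  have h4 := Submodule.finrank_sup_add_finrank_inf_eq H y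
  omega

lemma infx {x H y : Submodule F (Fin n → F)} (hxH : x ≤ H) :
    x ⊓ (H ⊓ y) = x ⊓ y := by
  rw [← inf_assoc, inf_eq_left.mpr hxH]

lemma inf_self_left (H y : Submodule F (Fin n → F)) : H ⊓ (H ⊓ y) = H ⊓ y := by
  rw [← inf_assoc, inf_idem]

-- the sup with a line outside H
lemma sup_point {H y : Submodule F (Fin n → F)} (hy : y ≤ H)
    {u : Fin n → F} (hu : u ∉ H) :
    finrank F ↥(y ⊔ Submodule.span F {u}) = finrank F y + 1
      ∧ ¬ (y ⊔ Submodule.span F {u}) ≤ H := by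
  have hu0 : u ≠ 0 := fun h => hu (h ▸ (Submodule.zero_mem H))
  have hdisj : Disjoint y (Submodule.span F {u}) := by
    rw [Submodule.disjoint_span_singleton]
    intro h; exact absurd (hy h) hu
  have h1 := Submodule.finrank_sup_add_finrank_inf_eq y (Submodule.span F {u})
  rw [hdisj.eq_bot, finrank_bot, finrank_span_singleton hu0] at h1
  constructor
  · omega
  · intro h
    exact hu (h (le_sup_right (a := y) (Submodule.subset_span rfl)))


open Classical in
lemma card_diff (A B : Submodule F (Fin n → F)) :
    (Finset.univ.filter fun v : Fin n → F => v ∈ A ∧ v ∉ B).card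
      = Fintype.card F ^ finrank F A - Fintype.card F ^ finrank F ↥(A ⊓ B) := by
  classical
  have hA : (Finset.univ.filter fun v : Fin n → F => v ∈ A).card
      = Fintype.card F ^ finrank F A := by
    rw [← Fintype.card_subtype]
    exact card_eq_pow_finrank (K := F) (V := ↥A)
  have hAB : (Finset.univ.filter fun v : Fin n → F => v ∈ A ∧ v ∈ B).card
      = Fintype.card F ^ finrank F ↥(A ⊓ B) := by
    rw [← Fintype.card_subtype]
    have : ∀ v : Fin n → F, (v ∈ A ∧ v ∈ B) ↔ v ∈ A ⊓ B := fun v => (Submodule.mem_inf).symm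
    rw [Fintype.card_congr (Equiv.subtypeEquivRight this)]
    exact card_eq_pow_finrank (K := F) (V := ↥(A ⊓ B))
  have key : (Finset.univ.filter fun v : Fin n → F => v ∈ A ∧ v ∈ B).card
      + (Finset.univ.filter fun v : Fin n → F => v ∈ A ∧ v ∉ B).card
      = (Finset.univ.filter fun v : Fin n → F => v ∈ A).card := by
    rw [← Finset.filter_filter, ← Finset.filter_filter]
    exact Finset.card_filter_add_card_filter_not (fun v => v ∈ B)
  omega

open Classical in
lemma count_cover {H : Submodule F (Fin n → F)} (hH : finrank F H + 1 = n)
    (w Y : Submodule F (Fin n → F)) (hwH : w ≤ H) (hwY : w ≤ Y) (hY : ¬ Y ≤ H) :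
    (Finset.univ.filter fun u : Submodule F (Fin n → F) =>
        w ≤ u ∧ u ≤ Y ∧ finrank F u = finrank F w + 1 ∧ ¬ u ≤ H).card
      = Fintype.card F ^ (finrank F Y - 1 - finrank F w) := by
  classical
  set q := Fintype.card F with hq
  have hq1 : 1 < q := Fintype.one_lt_card
  set d := finrank F w with hd
  set D := finrank F Y with hD
  -- the fibration v ↦ w ⊔ span {v}
  set s := (Finset.univ.filter fun v : Fin n → F => v ∈ Y ∧ v ∉ H) with hs
  set t := (Finset.univ.filter fun u : Submodule F (Fin n → F) =>
      w ≤ u ∧ u ≤ Y ∧ finrank F u = finrank F w + 1 ∧ ¬ u ≤ H) with ht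
  have hmaps : ∀ v ∈ s, (w ⊔ Submodule.span F {v}) ∈ t := by
    intro v hv
    rw [hs, Finset.mem_filter] at hv
    obtain ⟨-, hvY, hvH⟩ := hv
    rw [ht, Finset.mem_filter]
    obtain ⟨hr, hnle⟩ := sup_point hwH hvH
    exact ⟨Finset.mem_univ _, le_sup_left,
      sup_le hwY ((Submodule.span_singleton_le_iff_mem v Y).mpr hvY), hr, hnle⟩
  have hcards := Finset.card_eq_sum_card_fiberwise hmaps
  -- fibers
  have hfiber : ∀ u ∈ t, (s.filter fun v => w ⊔ Submodule.span F {v} = u).card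
      = q ^ (d + 1) - q ^ d := by
    intro u hu
    rw [ht, Finset.mem_filter] at hu
    obtain ⟨-, hwu, huY, hru, huH⟩ := hu
    have hset : (s.filter fun v => w ⊔ Submodule.span F {v} = u)
        = (Finset.univ.filter fun v : Fin n → F => v ∈ u ∧ v ∉ H) := by
      ext v
      rw [hs, Finset.filter_filter, Finset.mem_filter, Finset.mem_filter]
      simp only [Finset.mem_univ, true_and]
      constructor
      · rintro ⟨⟨hvY, hvH⟩, hvu⟩
        exact ⟨hvu ▸ le_sup_right (a := w) (Submodule.subset_span rfl), hvH⟩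
      · rintro ⟨hvu, hvH⟩
        refine ⟨⟨huY hvu, hvH⟩, ?_⟩
        have hle : w ⊔ Submodule.span F {v} ≤ u :=
          sup_le hwu ((Submodule.span_singleton_le_iff_mem v u).mpr hvu)
        have hr := (sup_point hwH hvH).1
        exact Submodule.eq_of_le_of_finrank_le hle (by omega)
    rw [hset, card_diff]
    have hHu : finrank F ↥(u ⊓ H) = d := by
      have := inf_rank hH huH
      rw [inf_comm] at this
      omega
    rw [hHu, hru]
  have hsum : s.card = t.card * (q ^ (d + 1) - q ^ d) := by
    rw [hcards, Finset.sum_congr rfl hfiber, Finset.sum_const, smul_eq_mul]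
  have hscard : s.card = q ^ D - q ^ (D - 1) := by
    rw [hs, card_diff]
    have : finrank F ↥(Y ⊓ H) = D - 1 := by
      have := inf_rank hH hY
      rw [inf_comm] at this
      omega
    rw [this]
  -- D ≥ d + 2? no: D ≥ d + 1
  have hdD : d + 1 ≤ D := by
    have h1 : w ≤ H ⊓ Y := le_inf hwH hwY
    have h2 : finrank F w ≤ finrank F ↥(H ⊓ Y) := Submodule.finrank_mono h1
    have h3 := inf_rank hH hY
    omega
  have hpos : 0 < q ^ (d + 1) - q ^ d := by
    have : q ^ d < q ^ (d + 1) := pow_lt_pow_right₀ hq1 (by omega)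
    omega
  have hval : q ^ (D - 1 - d) * (q ^ (d + 1) - q ^ d) = q ^ D - q ^ (D - 1) := by
    rw [Nat.mul_sub]
    rw [← pow_add, ← pow_add]
    congr 2 <;> omega
  refine Nat.eq_of_mul_eq_mul_right hpos ?_
  rw [← hsum, hscard, hval]

end Prelim

section Main
variable {F : Type} [Field F] [Fintype F] {n : ℕ}
variable {x H : Submodule F (Fin n → F)}

open Classical in
lemma rthree_apply (hH : finrank F H + 1 = n) (hxH : x ≤ H)
    (v : Submodule F (Fin n → F) → ℂ) (hv : ∀ y, ¬ y ≤ H → v y = 0) :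
    (RthreeT F n x H).mulVec v = fun y => if y ≤ H then 0 else v (H ⊓ y) := by
  classical
  funext y
  rw [Matrix.mulVec]
  show ∑ z, RthreeT F n x H y z * v z = _
  by_cases hy : y ≤ H
  · rw [if_pos hy]
    apply Finset.sum_eq_zero
    intro z _
    by_cases hz : z ≤ H
    · rw [RthreeT, if_neg, zero_mul]
      rintro ⟨h1, h2, h3, h4⟩
      rw [inf_eq_right.mpr hz, inf_eq_right.mpr hy] at h4
      omega
    · rw [hv z hz, mul_zero]
  · rw [if_neg hy]
    rw [Finset.sum_eq_single (H ⊓ y)]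
    · rw [RthreeT, if_pos, one_mul]
      refine ⟨inf_le_right, inf_rank hH hy, ?_, ?_⟩
      · rw [infx hxH]
      · rw [inf_self_left]
    · intro z _ hz
      by_cases hzH : z ≤ H
      · rw [RthreeT, if_neg, zero_mul]
        rintro ⟨h1, h2, h3, h4⟩
        rw [inf_eq_right.mpr hzH] at h4
        have hzy : z ≤ H ⊓ y := le_inf hzH h1
        have := inf_rank hH hy
        exact hz (Submodule.eq_of_le_of_finrank_le hzy (by omega))
      · rw [hv z hzH, mul_zero]
    · intro h
      exact absurd (Finset.mem_univ _) h

open Classical in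
/-- generic lowering matrix on the twisted poset, x-condition abstracted -/
noncomputable def genL (x H : Submodule F (Fin n → F)) (C : ℕ → ℕ → Prop) :
    Matrix (Submodule F (Fin n → F)) (Submodule F (Fin n → F)) ℂ :=
  fun y z => if y ≤ z ∧ finrank F y + 1 = finrank F z ∧
    C (finrank F ↥(x ⊓ y)) (finrank F ↥(x ⊓ z)) ∧
    finrank F ↥(H ⊓ y) + 1 = finrank F ↥(H ⊓ z) then 1 else 0

open Classical in
/-- generic lowering matrix on the untwisted poset -/
noncomputable def genLRel (x H : Submodule F (Fin n → F)) (C : ℕ → ℕ → Prop) :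
    Matrix (Submodule F (Fin n → F)) (Submodule F (Fin n → F)) ℂ :=
  fun y z => if z ≤ H ∧ y ≤ z ∧ finrank F y + 1 = finrank F z ∧
    C (finrank F ↥(x ⊓ y)) (finrank F ↥(x ⊓ z)) then 1 else 0

open Classical in
lemma genL_comm (hH : finrank F H + 1 = n) (hxH : x ≤ H) (C : ℕ → ℕ → Prop)
    (v : Submodule F (Fin n → F) → ℂ) (hv : ∀ y, ¬ y ≤ H → v y = 0) :
    (genL x H C).mulVec ((RthreeT F n x H).mulVec v)
      = (RthreeT F n x H).mulVec ((genLRel x H C).mulVec v) := by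
  classical
  have hsupp : ∀ y, ¬ y ≤ H → (genLRel x H C).mulVec v y = 0 := by
    intro y hy
    rw [Matrix.mulVec]
    apply Finset.sum_eq_zero; intro z _
    simp only [genLRel]
    rw [if_neg, zero_mul]
    rintro ⟨h1, h2, -⟩
    exact hy (h2.trans h1)
  rw [rthree_apply hH hxH v hv, rthree_apply hH hxH _ hsupp]
  funext y
  rw [Matrix.mulVec]
  show (∑ u, genL x H C y u * (if u ≤ H then 0 else v (H ⊓ u))) = _
  by_cases hy : y ≤ H
  · rw [if_pos hy]
    apply Finset.sum_eq_zero; intro u _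
    by_cases hu : u ≤ H
    · rw [if_pos hu, mul_zero]
    · rw [genL, if_neg, zero_mul]
      rintro ⟨h1, h2, h3, h4⟩
      have := inf_rank hH hu
      rw [inf_eq_right.mpr hy] at h4
      omega
  · rw [if_neg hy, Matrix.mulVec]
    show _ = ∑ w, genLRel x H C (H ⊓ y) w * v w
    have hzy := inf_rank hH hy
    have lhs_eq : (∑ u, genL x H C y u * (if u ≤ H then 0 else v (H ⊓ u)))
        = ∑ u ∈ Finset.univ.filter (fun u => (y ≤ u ∧ finrank F y + 1 = finrank F u ∧
            C (finrank F ↥(x ⊓ y)) (finrank F ↥(x ⊓ u)) ∧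
            finrank F ↥(H ⊓ y) + 1 = finrank F ↥(H ⊓ u)) ∧ ¬ u ≤ H), v (H ⊓ u) := by
      rw [Finset.sum_filter]
      apply Finset.sum_congr rfl
      intro u _
      rw [genL]
      by_cases h1 : (y ≤ u ∧ finrank F y + 1 = finrank F u ∧
            C (finrank F ↥(x ⊓ y)) (finrank F ↥(x ⊓ u)) ∧
            finrank F ↥(H ⊓ y) + 1 = finrank F ↥(H ⊓ u)) <;>
        by_cases h2 : u ≤ H <;> simp [h1, h2]
    have rhs_eq : (∑ w, genLRel x H C (H ⊓ y) w * v w)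
        = ∑ w ∈ Finset.univ.filter (fun w => w ≤ H ∧ H ⊓ y ≤ w ∧
            finrank F ↥(H ⊓ y) + 1 = finrank F w ∧
            C (finrank F ↥(x ⊓ (H ⊓ y))) (finrank F ↥(x ⊓ w))), v w := by
      rw [Finset.sum_filter]
      apply Finset.sum_congr rfl
      intro w _
      rw [genLRel]
      by_cases h1 : (w ≤ H ∧ H ⊓ y ≤ w ∧ finrank F ↥(H ⊓ y) + 1 = finrank F w ∧
            C (finrank F ↥(x ⊓ (H ⊓ y))) (finrank F ↥(x ⊓ w))) <;> simp [h1]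
    rw [lhs_eq, rhs_eq]
    apply Finset.sum_nbij' (i := fun u => H ⊓ u) (j := fun w => y ⊔ w)
    · intro u hu
      rw [Finset.mem_filter] at hu ⊢
      obtain ⟨-, ⟨h1, h2, h3, h4⟩, hu5⟩ := hu
      refine ⟨Finset.mem_univ _, inf_le_left, inf_le_inf_left H h1, h4, ?_⟩
      rw [infx hxH, infx hxH]
      exact h3
    · intro w hw
      rw [Finset.mem_filter] at hw ⊢
      obtain ⟨-, hwH, hzw, hr, hx3⟩ := hw
      have hyw_inf : y ⊓ w = H ⊓ y :=
        le_antisymm (le_inf (inf_le_right.trans hwH) inf_le_left)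
          (le_inf inf_le_right hzw)
      have hsupr := Submodule.finrank_sup_add_finrank_inf_eq y w
      rw [hyw_inf] at hsupr
      have hfr : finrank F ↥(y ⊔ w) = finrank F y + 1 := by omega
      have hyuw : ¬ (y ⊔ w) ≤ H := fun h => hy (le_sup_left.trans h)
      have hHyw : H ⊓ (y ⊔ w) = w := by
        have h5 := inf_rank hH hyuw
        refine (Submodule.eq_of_le_of_finrank_le (le_inf hwH le_sup_right) ?_).symm
        omega
      refine ⟨Finset.mem_univ _, ⟨le_sup_left, hfr.symm, ?_, ?_⟩, hyuw⟩
      · rw [← infx hxH (y := y), ← infx hxH (y := y ⊔ w), hHyw]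
        exact hx3
      · rw [hHyw]; exact hr
    · intro u hu
      rw [Finset.mem_filter] at hu
      obtain ⟨-, ⟨h1, h2, h3, h4⟩, hu5⟩ := hu
      have hinf : y ⊓ (H ⊓ u) = H ⊓ y :=
        le_antisymm (le_inf (inf_le_right.trans inf_le_left) inf_le_left)
          (le_inf inf_le_right (le_inf inf_le_left (inf_le_right.trans h1)))
      have hsupr := Submodule.finrank_sup_add_finrank_inf_eq y (H ⊓ u)
      rw [hinf] at hsupr
      exact Submodule.eq_of_le_of_finrank_le (sup_le h1 inf_le_right) (by omega)
    · intro w hw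
      rw [Finset.mem_filter] at hw
      obtain ⟨-, hwH, hzw, hr, hx3⟩ := hw
      have hyw_inf : y ⊓ w = H ⊓ y :=
        le_antisymm (le_inf (inf_le_right.trans hwH) inf_le_left)
          (le_inf inf_le_right hzw)
      have hsupr := Submodule.finrank_sup_add_finrank_inf_eq y w
      rw [hyw_inf] at hsupr
      have hyuw : ¬ (y ⊔ w) ≤ H := fun h => hy (le_sup_left.trans h)
      have h5 := inf_rank hH hyuw
      refine (Submodule.eq_of_le_of_finrank_le (le_inf hwH le_sup_right) ?_).symm
      omega
    · intro u hu
      rfl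

open Classical in
/-- generic raising matrix on the twisted poset, x-condition abstracted -/
noncomputable def genR (x H : Submodule F (Fin n → F)) (C : ℕ → ℕ → Prop) :
    Matrix (Submodule F (Fin n → F)) (Submodule F (Fin n → F)) ℂ :=
  fun y z => if z ≤ y ∧ finrank F z + 1 = finrank F y ∧
    C (finrank F ↥(x ⊓ z)) (finrank F ↥(x ⊓ y)) ∧
    finrank F ↥(H ⊓ z) + 1 = finrank F ↥(H ⊓ y) then 1 else 0

open Classical in
/-- generic raising matrix on the untwisted poset -/
noncomputable def genRRel (x H : Submodule F (Fin n → F)) (C : ℕ → ℕ → Prop) :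
    Matrix (Submodule F (Fin n → F)) (Submodule F (Fin n → F)) ℂ :=
  fun y z => if y ≤ H ∧ z ≤ y ∧ finrank F z + 1 = finrank F y ∧
    C (finrank F ↥(x ⊓ z)) (finrank F ↥(x ⊓ y)) then 1 else 0

open Classical in
lemma genR_comm (hH : finrank F H + 1 = n) (hxH : x ≤ H) (C : ℕ → ℕ → Prop)
    (v : Submodule F (Fin n → F) → ℂ) (hv : ∀ y, ¬ y ≤ H → v y = 0) :
    (genR x H C).mulVec ((RthreeT F n x H).mulVec v)
      = (Fintype.card F : ℂ) • (RthreeT F n x H).mulVec ((genRRel x H C).mulVec v) := by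
  classical
  have hsupp : ∀ y, ¬ y ≤ H → (genRRel x H C).mulVec v y = 0 := by
    intro y hy
    rw [Matrix.mulVec]
    apply Finset.sum_eq_zero; intro z _
    simp only [genRRel]
    rw [if_neg, zero_mul]
    rintro ⟨h1, -⟩
    exact hy h1
  rw [rthree_apply hH hxH v hv, rthree_apply hH hxH _ hsupp]
  funext y
  rw [Matrix.mulVec, Pi.smul_apply, smul_eq_mul]
  show (∑ u, genR x H C y u * (if u ≤ H then 0 else v (H ⊓ u))) = _
  by_cases hy : y ≤ H
  · rw [if_pos hy, mul_zero]
    apply Finset.sum_eq_zero; intro u _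
    by_cases hu : u ≤ H
    · rw [if_pos hu, mul_zero]
    · simp only [genR]
      rw [if_neg, zero_mul]
      rintro ⟨h1, -⟩
      exact hu (h1.trans hy)
  · rw [if_neg hy, Matrix.mulVec]
    show _ = (Fintype.card F : ℂ) * ∑ w, genRRel x H C (H ⊓ y) w * v w
    have hzy := inf_rank hH hy
    have lhs_eq : (∑ u, genR x H C y u * (if u ≤ H then 0 else v (H ⊓ u)))
        = ∑ u ∈ Finset.univ.filter (fun u => (u ≤ y ∧ finrank F u + 1 = finrank F y ∧
            C (finrank F ↥(x ⊓ u)) (finrank F ↥(x ⊓ y)) ∧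
            finrank F ↥(H ⊓ u) + 1 = finrank F ↥(H ⊓ y)) ∧ ¬ u ≤ H), v (H ⊓ u) := by
      rw [Finset.sum_filter]
      apply Finset.sum_congr rfl
      intro u _
      simp only [genR]
      by_cases h1 : (u ≤ y ∧ finrank F u + 1 = finrank F y ∧
            C (finrank F ↥(x ⊓ u)) (finrank F ↥(x ⊓ y)) ∧
            finrank F ↥(H ⊓ u) + 1 = finrank F ↥(H ⊓ y)) <;>
        by_cases h2 : u ≤ H <;> simp [h1, h2]
    have rhs_eq : (∑ w, genRRel x H C (H ⊓ y) w * v w)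
        = ∑ w ∈ Finset.univ.filter (fun w => H ⊓ y ≤ H ∧ w ≤ H ⊓ y ∧
            finrank F w + 1 = finrank F ↥(H ⊓ y) ∧
            C (finrank F ↥(x ⊓ w)) (finrank F ↥(x ⊓ (H ⊓ y)))), v w := by
      rw [Finset.sum_filter]
      apply Finset.sum_congr rfl
      intro w _
      simp only [genRRel]
      by_cases h1 : (H ⊓ y ≤ H ∧ w ≤ H ⊓ y ∧ finrank F w + 1 = finrank F ↥(H ⊓ y) ∧
            C (finrank F ↥(x ⊓ w)) (finrank F ↥(x ⊓ (H ⊓ y)))) <;> simp [h1]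
    rw [lhs_eq, rhs_eq]
    have hmaps : ∀ u ∈ Finset.univ.filter (fun u => (u ≤ y ∧ finrank F u + 1 = finrank F y ∧
            C (finrank F ↥(x ⊓ u)) (finrank F ↥(x ⊓ y)) ∧
            finrank F ↥(H ⊓ u) + 1 = finrank F ↥(H ⊓ y)) ∧ ¬ u ≤ H),
        H ⊓ u ∈ Finset.univ.filter (fun w => H ⊓ y ≤ H ∧ w ≤ H ⊓ y ∧
            finrank F w + 1 = finrank F ↥(H ⊓ y) ∧
            C (finrank F ↥(x ⊓ w)) (finrank F ↥(x ⊓ (H ⊓ y)))) := by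
      intro u hu
      rw [Finset.mem_filter] at hu ⊢
      obtain ⟨-, ⟨h1, h2, h3, h4⟩, hu5⟩ := hu
      refine ⟨Finset.mem_univ _, inf_le_left, inf_le_inf_left H h1, h4, ?_⟩
      rw [infx hxH, infx hxH]
      exact h3
    rw [← Finset.sum_fiberwise_of_maps_to hmaps (fun u => v (H ⊓ u)), Finset.mul_sum]
    apply Finset.sum_congr rfl
    intro w hw
    rw [Finset.mem_filter] at hw
    obtain ⟨-, -, hw1, hw2, hw3⟩ := hw
    have hwH : w ≤ H := hw1.trans inf_le_left
    have hinner : ∀ u ∈ (Finset.univ.filter (fun u => (u ≤ y ∧ finrank F u + 1 = finrank F y ∧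
            C (finrank F ↥(x ⊓ u)) (finrank F ↥(x ⊓ y)) ∧
            finrank F ↥(H ⊓ u) + 1 = finrank F ↥(H ⊓ y)) ∧ ¬ u ≤ H)).filter
            (fun u => H ⊓ u = w), v (H ⊓ u) = v w := by
      intro u hu
      rw [Finset.mem_filter] at hu
      rw [hu.2]
    rw [Finset.sum_congr rfl hinner, Finset.sum_const]
    have hfib : ((Finset.univ.filter (fun u => (u ≤ y ∧ finrank F u + 1 = finrank F y ∧
            C (finrank F ↥(x ⊓ u)) (finrank F ↥(x ⊓ y)) ∧
            finrank F ↥(H ⊓ u) + 1 = finrank F ↥(H ⊓ y)) ∧ ¬ u ≤ H)).filter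
            (fun u => H ⊓ u = w))
        = Finset.univ.filter (fun u : Submodule F (Fin n → F) =>
            w ≤ u ∧ u ≤ y ∧ finrank F u = finrank F w + 1 ∧ ¬ u ≤ H) := by
      ext u
      rw [Finset.filter_filter, Finset.mem_filter, Finset.mem_filter]
      simp only [Finset.mem_univ, true_and]
      constructor
      · rintro ⟨⟨⟨h1, h2, h3, h4⟩, hu5⟩, heq⟩
        have h6 := inf_rank hH hu5
        exact ⟨heq ▸ inf_le_right, h1, by omega, hu5⟩
      · rintro ⟨hwu, huy, hru, hu5⟩
        have h6 := inf_rank hH hu5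
        have hHu : H ⊓ u = w :=
          (Submodule.eq_of_le_of_finrank_le (le_inf hwH hwu) (by omega)).symm
        have e1 : x ⊓ u = x ⊓ w := by rw [← infx hxH (y := u), hHu]
        have e2 : x ⊓ y = x ⊓ (H ⊓ y) := (infx hxH).symm
        refine ⟨⟨⟨huy, by omega, ?_, by rw [hHu]; omega⟩, hu5⟩, hHu⟩
        rw [e1, e2]
        exact hw3
    rw [hfib, count_cover hH w y hwH (hw1.trans inf_le_right) hy]
    have he : finrank F y - 1 - finrank F w = 1 := by omega
    rw [he, pow_one, nsmul_eq_mul]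

open Classical in
lemma lthree_estar (hH : finrank F H + 1 = n) (hxH : x ≤ H) (i j : ℕ)
    (v : Submodule F (Fin n → F) → ℂ) :
    (LthreeT F n x H).mulVec ((RthreeT F n x H).mulVec ((EstarRel F n x H i j).mulVec v))
      = ((Fintype.card F : ℂ) ^ (n - 1 - (i + j) : ℕ)) • (EstarRel F n x H i j).mulVec v := by
  classical
  set w := (EstarRel F n x H i j).mulVec v with hwdef
  have hwy : ∀ y, w y = (if y ≤ H ∧ (finrank F ↥(x ⊓ y) : ℤ) = i ∧
      (finrank F y : ℤ) = i + j then 1 else 0) * v y := by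
    intro y
    rw [hwdef, EstarRel, Matrix.mulVec_diagonal]
  have hw : ∀ y, ¬ y ≤ H → w y = 0 := by
    intro y hy
    rw [hwy y, if_neg, zero_mul]
    exact fun h => hy h.1
  rw [rthree_apply hH hxH _ hw]
  funext y
  rw [Matrix.mulVec, Pi.smul_apply, smul_eq_mul]
  show (∑ u, LthreeT F n x H y u * (if u ≤ H then 0 else w (H ⊓ u))) = _
  by_cases hy : y ≤ H
  · have hterm : ∀ u : Submodule F (Fin n → F),
        LthreeT F n x H y u * (if u ≤ H then 0 else w (H ⊓ u))
          = if (y ≤ u ∧ u ≤ (⊤ : Submodule F (Fin n → F)) ∧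
              finrank F u = finrank F y + 1 ∧ ¬ u ≤ H) then w y else 0 := by
      intro u
      by_cases hu : u ≤ H
      · rw [if_pos hu, mul_zero, if_neg]
        rintro ⟨-, -, -, h⟩; exact h hu
      · rw [if_neg hu]
        have hr := inf_rank hH hu
        by_cases hP : (y ≤ u ∧ finrank F y + 1 = finrank F u ∧
            finrank F ↥(x ⊓ y) = finrank F ↥(x ⊓ u) ∧
            finrank F ↥(H ⊓ y) = finrank F ↥(H ⊓ u))
        · obtain ⟨h1, h2, h3, h4⟩ := hP
          have hHu : H ⊓ u = y := by
            refine (Submodule.eq_of_le_of_finrank_le (le_inf hy h1) ?_).symm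
            omega
          rw [LthreeT, if_pos ⟨h1, h2, h3, h4⟩, one_mul, hHu,
            if_pos ⟨h1, le_top, by omega, hu⟩]
        · rw [LthreeT, if_neg hP, zero_mul, if_neg]
          rintro ⟨h1, -, h2, -⟩
          have hHu : H ⊓ u = y := by
            refine (Submodule.eq_of_le_of_finrank_le (le_inf hy h1) ?_).symm
            omega
          refine hP ⟨h1, by omega, ?_, ?_⟩
          · rw [← infx hxH (y := u), hHu]
          · rw [inf_eq_right.mpr hy, hHu]
      
    rw [Finset.sum_congr rfl (fun u _ => hterm u), ← Finset.sum_filter,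
      Finset.sum_const]
    have hTH : ¬ (⊤ : Submodule F (Fin n → F)) ≤ H := by
      intro h
      have : finrank F (⊤ : Submodule F (Fin n → F)) ≤ finrank F H :=
        Submodule.finrank_mono h
      rw [finrank_top, frV] at this
      omega
    rw [count_cover hH y ⊤ hy le_top hTH]
    rw [hwy y]
    by_cases hcond : (y ≤ H ∧ (finrank F ↥(x ⊓ y) : ℤ) = i ∧ (finrank F y : ℤ) = i + j)
    · rw [if_pos hcond, one_mul, nsmul_eq_mul, Nat.cast_pow]
      have hfr : finrank F y = i + j := by
        have := hcond.2.2
        omega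
      rw [finrank_top, frV, hfr]
    · rw [if_neg hcond, zero_mul, smul_zero, mul_zero]
  · have hterm : ∀ u : Submodule F (Fin n → F),
        LthreeT F n x H y u * (if u ≤ H then 0 else w (H ⊓ u)) = 0 := by
      intro u
      by_cases hu : u ≤ H
      · rw [if_pos hu, mul_zero]
      · rw [LthreeT, if_neg, zero_mul]
        rintro ⟨h1, h2, h3, h4⟩
        have hry := inf_rank hH hy
        have hru := inf_rank hH hu
        omega
    rw [Finset.sum_congr rfl (fun u _ => hterm u), Finset.sum_const_zero,
      hwy y, if_neg (fun h => hy h.1), zero_mul, mul_zero]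

open Classical in
lemma rthree_sq (hH : finrank F H + 1 = n) (hxH : x ≤ H)
    (v : Submodule F (Fin n → F) → ℂ) (hv : ∀ y, ¬ y ≤ H → v y = 0) :
    (RthreeT F n x H).mulVec ((RthreeT F n x H).mulVec v) = 0 := by
  classical
  rw [rthree_apply hH hxH v hv]
  funext y
  rw [Matrix.mulVec, Pi.zero_apply]
  show (∑ z, RthreeT F n x H y z * (if z ≤ H then 0 else v (H ⊓ z))) = 0
  apply Finset.sum_eq_zero; intro z _
  by_cases hz : z ≤ H
  · rw [if_pos hz, mul_zero]
  · rw [RthreeT, if_neg, zero_mul]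
    rintro ⟨h1, h2, h3, h4⟩
    have hrz := inf_rank hH hz
    by_cases hy : y ≤ H
    · exact hz (h1.trans hy)
    · have hry := inf_rank hH hy
      omega

open Classical in
lemma estar_zero (hH : finrank F H + 1 = n) (hxH : x ≤ H) (i j : ℤ)
    (v : Submodule F (Fin n → F) → ℂ) (hv : ∀ y, ¬ y ≤ H → v y = 0) :
    (EstarT F n x H i j 0).mulVec ((RthreeT F n x H).mulVec v) = 0 := by
  classical
  rw [rthree_apply hH hxH v hv]
  funext y
  rw [EstarT, Matrix.mulVec_diagonal, Pi.zero_apply]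
  by_cases hy : y ≤ H
  · rw [if_pos hy, mul_zero]
  · rw [if_neg, zero_mul]
    intro h
    rw [PtMem] at h
    obtain ⟨p1, p2, p3⟩ := h
    have := inf_rank hH hy
    omega

open Classical in
lemma estar_one (hH : finrank F H + 1 = n) (hxH : x ≤ H) (i j : ℕ)
    (v : Submodule F (Fin n → F) → ℂ) (hv : ∀ y, ¬ y ≤ H → v y = 0) :
    (EstarT F n x H i j 1).mulVec ((RthreeT F n x H).mulVec v)
      = (RthreeT F n x H).mulVec ((EstarRel F n x H i j).mulVec v) := by
  classical
  have hsupp : ∀ y, ¬ y ≤ H → (EstarRel F n x H i j).mulVec v y = 0 := by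
    intro y hy
    rw [EstarRel, Matrix.mulVec_diagonal, if_neg, zero_mul]
    exact fun h => hy h.1
  rw [rthree_apply hH hxH v hv, rthree_apply hH hxH _ hsupp]
  funext y
  rw [EstarT, Matrix.mulVec_diagonal]
  by_cases hy : y ≤ H
  · rw [if_pos hy, if_pos hy, mul_zero]
  · rw [if_neg hy, if_neg hy, EstarRel, Matrix.mulVec_diagonal]
    have hiff : PtMem F n x H i j 1 y ↔ (H ⊓ y ≤ H ∧
        (finrank F ↥(x ⊓ (H ⊓ y)) : ℤ) = i ∧ (finrank F ↥(H ⊓ y) : ℤ) = i + j) := by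
      rw [PtMem]
      have hr := inf_rank hH hy
      have hx2 := infx (y := y) hxH
      constructor
      · rintro ⟨p1, p2, p3⟩
        exact ⟨inf_le_left, by rw [hx2]; exact p1, p2⟩
      · rintro ⟨q1, q2, q3⟩
        refine ⟨by rw [← hx2]; exact q2, q3, by omega⟩
    rw [if_congr hiff rfl rfl]

lemma smap_fix_s10 {e : (Fin n → F) ≃ₗ[F] (Fin n → F)} {s : Submodule F (Fin n → F)}
    (he : ∀ w ∈ s, e w = w) : smap F n e s = s := by
  ext w
  simp only [smap, Submodule.mem_map, LinearEquiv.coe_coe]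
  constructor
  · rintro ⟨u, hu, rfl⟩
    rw [he u hu]; exact hu
  · intro hw
    exact ⟨w, hw, he w hw⟩

lemma smap_inf_H {e : (Fin n → F) ≃ₗ[F] (Fin n → F)}
    (he : ∀ w ∈ H, e w = w) (y : Submodule F (Fin n → F)) :
    H ⊓ smap F n e y = H ⊓ y := by
  ext w
  simp only [Submodule.mem_inf, smap, Submodule.mem_map, LinearEquiv.coe_coe]
  constructor
  · rintro ⟨hwH, u, hu, rfl⟩
    have heu : e u = u := e.injective (he _ hwH)
    rw [heu] at hwH ⊢
    exact ⟨hwH, hu⟩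
  · rintro ⟨hwH, hwy⟩
    exact ⟨hwH, w, hwy, he w hwH⟩

lemma smap_le_H {e : (Fin n → F) ≃ₗ[F] (Fin n → F)}
    (he : ∀ w ∈ H, e w = w) (y : Submodule F (Fin n → F)) :
    smap F n e y ≤ H ↔ y ≤ H := by
  constructor
  · intro h u hu
    have h1 : e u ∈ H := h (Submodule.mem_map_of_mem (f := (e : (Fin n → F) →ₗ[F] (Fin n → F))) hu)
    have heu : e u = u := e.injective (he _ h1)
    rwa [heu] at h1
  · intro h u hu
    obtain ⟨z, hz, rfl⟩ := hu
    show e z ∈ H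
    rw [he z (h hz)]
    exact h hz

lemma H_lt_top (hH : finrank F H + 1 = n) : H < ⊤ := by
  refine lt_of_le_of_ne le_top (fun h => ?_)
  rw [h, finrank_top, frV] at hH
  omega

open Classical in
lemma rthree_inj (hH : finrank F H + 1 = n) (hxH : x ≤ H)
    (v w : Submodule F (Fin n → F) → ℂ)
    (hv : ∀ y, ¬ y ≤ H → v y = 0) (hw : ∀ y, ¬ y ≤ H → w y = 0)
    (h : (RthreeT F n x H).mulVec v = (RthreeT F n x H).mulVec w) : v = w := by
  rw [rthree_apply hH hxH v hv, rthree_apply hH hxH w hw] at h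
  obtain ⟨u0, -, hu0⟩ := SetLike.exists_of_lt (H_lt_top hH)
  funext y
  by_cases hy : y ≤ H
  · have hsp := sup_point hy hu0
    have hkey := congrFun h (y ⊔ Submodule.span F {u0})
    rw [if_neg hsp.2, if_neg hsp.2] at hkey
    have hinf : H ⊓ (y ⊔ Submodule.span F {u0}) = y := by
      have h5 := inf_rank hH hsp.2
      refine (Submodule.eq_of_le_of_finrank_le (le_inf hy le_sup_left) ?_).symm
      omega
    rwa [hinf] at hkey
  · rw [hv y hy, hw y hy]

open Classical in
lemma rthree_mem_M (hH : finrank F H + 1 = n) (hxH : x ≤ H) [Fintype (Gsub F n H)]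
    (v : Submodule F (Fin n → F) → ℂ) (hv : ∀ y, ¬ y ≤ H → v y = 0) :
    (RthreeT F n x H).mulVec v ∈ Mcomp F n H (1 : Gsub F n H →* ℂ) {y | ¬ y ≤ H} := by
  rw [rthree_apply hH hxH v hv]
  refine ⟨?_, ?_⟩
  · intro y hy
    simp only [Set.mem_setOf_eq, not_not] at hy
    exact if_pos hy
  · intro g y
    have he : ∀ w ∈ H, ((g⁻¹ : Gsub F n H) : (Fin n → F) ≃ₗ[F] (Fin n → F)) w = w :=
      (g⁻¹ : Gsub F n H).2.2
    rw [MonoidHom.one_apply, one_mul]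
    beta_reduce
    by_cases hy : y ≤ H
    · rw [if_pos ((smap_le_H he y).mpr hy), if_pos hy]
    · rw [if_neg (fun h => hy ((smap_le_H he y).mp h)), if_neg hy, smap_inf_H he y]

open Classical in
lemma exists_transvection (hH : finrank F H + 1 = n)
    {y y' : Submodule F (Fin n → F)} (hy : ¬ y ≤ H) (hy' : ¬ y' ≤ H)
    (hinf : H ⊓ y = H ⊓ y') :
    ∃ g : Gsub F n H, smap F n (g : (Fin n → F) ≃ₗ[F] (Fin n → F)) y = y' := by
  classical
  obtain ⟨u₁, hu₁y, hu₁H⟩ := SetLike.not_le_iff_exists.mp hy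
  obtain ⟨u₂, hu₂y, hu₂H⟩ := SetLike.not_le_iff_exists.mp hy'
  -- the functional f with kernel H and f u₁ = 1
  set π := H.mkQ with hπ
  have hπu₁ : π u₁ ≠ 0 := by
    rw [hπ, Submodule.mkQ_apply, ne_eq, Submodule.Quotient.mk_eq_zero]
    exact hu₁H
  have hQ1 : finrank F ((Fin n → F) ⧸ H) = 1 := by
    have := Submodule.finrank_quotient_add_finrank H
    rw [frV] at this
    omega
  set L := LinearMap.toSpanSingleton F ((Fin n → F) ⧸ H) (π u₁) with hL
  have hLapp : ∀ c : F, L c = c • π u₁ := fun c => rfl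
  have hLinj : Function.Injective L := by
    intro c c' hcc
    have h0 : (c - c') • π u₁ = 0 := by
      rw [sub_smul, ← hLapp, ← hLapp, hcc, sub_self]
    rcases smul_eq_zero.mp h0 with h | h
    · exact sub_eq_zero.mp h
    · exact absurd h hπu₁
  have hLsurj : Function.Surjective L := by
    have hsp : Submodule.span F {π u₁} = ⊤ := by
      apply Submodule.eq_top_of_finrank_eq
      rw [finrank_span_singleton hπu₁, hQ1]
    intro q
    have hq : q ∈ Submodule.span F {π u₁} := by rw [hsp]; trivial
    obtain ⟨c, hc⟩ := Submodule.mem_span_singleton.mp hq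
    exact ⟨c, hc⟩
  set eL := LinearEquiv.ofBijective L ⟨hLinj, hLsurj⟩ with heL
  set f : (Fin n → F) →ₗ[F] F := eL.symm.toLinearMap.comp π with hf
  have hf_app : ∀ w, f w = eL.symm (π w) := fun w => rfl
  have hf_H : ∀ w ∈ H, f w = 0 := by
    intro w hw
    rw [hf_app]
    have : π w = 0 := by
      rw [hπ, Submodule.mkQ_apply, Submodule.Quotient.mk_eq_zero]
      exact hw
    rw [this, map_zero]
  have hf_u₁ : f u₁ = 1 := by
    rw [hf_app]
    have h1 : eL 1 = π u₁ := by
      show L 1 = π u₁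
      rw [hLapp, one_smul]
    rw [← h1, LinearEquiv.symm_apply_apply]
  have hf_ker : ∀ w, f w = 0 → w ∈ H := by
    intro w h0
    rw [hf_app] at h0
    have hπw : π w = 0 := by
      have := congrArg eL h0
      rwa [LinearEquiv.apply_symm_apply, map_zero] at this
    rw [hπ, Submodule.mkQ_apply, Submodule.Quotient.mk_eq_zero] at hπw
    exact hπw
  -- the transvection data
  set c := f u₂ with hc
  have hc0 : c ≠ 0 := fun h => hu₂H (hf_ker _ h)
  set h₀ := c⁻¹ • u₂ - u₁ with hh₀
  have hfh₀ : f h₀ = 0 := by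
    rw [hh₀, map_sub, map_smul, hf_u₁, smul_eq_mul, ← hc, inv_mul_cancel₀ hc0, sub_self]
  have hh₀H : h₀ ∈ H := hf_ker _ hfh₀
  set N : (Fin n → F) →ₗ[F] (Fin n → F) :=
    (LinearMap.toSpanSingleton F (Fin n → F) h₀).comp f with hN
  have hN_app : ∀ w, N w = f w • h₀ := fun w => rfl
  set T : (Fin n → F) →ₗ[F] (Fin n → F) := LinearMap.id + N with hT
  set T' : (Fin n → F) →ₗ[F] (Fin n → F) := LinearMap.id - N with hT'
  have hT_app : ∀ w, T w = w + f w • h₀ := fun w => rfl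
  have hT'_app : ∀ w, T' w = w - f w • h₀ := fun w => rfl
  have hNN : ∀ w, N (N w) = 0 := by
    intro w
    rw [hN_app, hN_app, map_smul, hfh₀, smul_zero, zero_smul]
  have hcomp1 : T.comp T' = LinearMap.id := by
    apply LinearMap.ext
    intro w
    rw [LinearMap.comp_apply, hT_app, hT'_app, map_sub, map_smul, hfh₀, smul_zero,
      sub_zero, LinearMap.id_apply, sub_add_cancel]
  have hcomp2 : T'.comp T = LinearMap.id := by
    apply LinearMap.ext
    intro w
    rw [LinearMap.comp_apply, hT'_app, hT_app, map_add, map_smul, hfh₀, smul_zero,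
      add_zero, LinearMap.id_apply, add_sub_cancel_right]
  set τ : (Fin n → F) ≃ₗ[F] (Fin n → F) := LinearEquiv.ofLinear T T' hcomp1 hcomp2 with hτ
  have hτ_app : ∀ w, τ w = w + f w • h₀ := fun w => rfl
  have hτ_coe : (τ : (Fin n → F) →ₗ[F] (Fin n → F)) = T := rfl
  have hτ_fix : ∀ w ∈ H, τ w = w := by
    intro w hw
    rw [hτ_app, hf_H w hw, zero_smul, add_zero]
  -- determinant computation
  have hpow : ∀ k : ℕ, (T ^ k : Module.End F (Fin n → F)) = LinearMap.id + (k : F) • N := by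
    intro k
    induction k with
    | zero => simp [Module.End.one_eq_id]
    | succ k ih =>
      rw [pow_succ, ih]
      apply LinearMap.ext
      intro w
      rw [Module.End.mul_apply]
      have e1 : (T : Module.End F (Fin n → F)) w = w + N w := by
        rw [hT_app, ← hN_app]
      rw [e1, LinearMap.add_apply, LinearMap.id_apply, LinearMap.smul_apply,
        map_add, hNN, add_zero, LinearMap.add_apply, LinearMap.id_apply,
        LinearMap.smul_apply, Nat.cast_succ, add_smul, one_smul]
      abel
  have hTq : (T ^ Fintype.card F : Module.End F (Fin n → F)) = LinearMap.id := by
    rw [hpow, FiniteField.cast_card_eq_zero, zero_smul, add_zero]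
  have hdetT : LinearMap.det T = 1 := by
    have h1 : (LinearMap.det T) ^ Fintype.card F = 1 := by
      rw [← map_pow, hTq]
      exact LinearMap.det_id
    rw [← FiniteField.pow_card (LinearMap.det T), h1]
  have hτ_det : LinearEquiv.det τ = 1 := by
    apply Units.ext
    rw [LinearEquiv.coe_det, hτ_coe, hdetT, Units.val_one]
  have hτ_mem : τ ∈ Gsub F n H := ⟨hτ_det, hτ_fix⟩
  refine ⟨⟨τ, hτ_mem⟩, ?_⟩
  -- computing the image of y
  have hry := inf_rank hH hy
  have hry' := inf_rank hH hy'
  have hyz : y = (H ⊓ y) ⊔ Submodule.span F {u₁} := by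
    have hsp := sup_point (inf_le_left : H ⊓ y ≤ H) hu₁H
    refine (Submodule.eq_of_le_of_finrank_le
      (sup_le inf_le_right ((Submodule.span_singleton_le_iff_mem u₁ y).mpr hu₁y)) ?_).symm
    omega
  have hyz' : y' = (H ⊓ y) ⊔ Submodule.span F {u₂} := by
    have hsp := sup_point (inf_le_left : H ⊓ y' ≤ H) hu₂H
    rw [hinf]
    refine (Submodule.eq_of_le_of_finrank_le
      (sup_le inf_le_right ((Submodule.span_singleton_le_iff_mem u₂ y').mpr hu₂y)) ?_).symm
    omega
  have hτu₁ : τ u₁ = c⁻¹ • u₂ := by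
    rw [hτ_app, hf_u₁, one_smul, hh₀, add_sub_cancel]
  show smap F n τ y = y'
  rw [hyz, smap, Submodule.map_sup]
  have h1 : Submodule.map (τ : (Fin n → F) →ₗ[F] (Fin n → F)) (H ⊓ y) = H ⊓ y := by
    have := smap_fix_s10 (e := τ) (s := H ⊓ y)
      (fun w hw => hτ_fix w (Submodule.mem_inf.mp hw).1)
    exact this
  have h2 : Submodule.map (τ : (Fin n → F) →ₗ[F] (Fin n → F)) (Submodule.span F {u₁})
      = Submodule.span F {u₂} := by
    rw [Submodule.map_span, Set.image_singleton, LinearEquiv.coe_coe, hτu₁]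
    exact Submodule.span_singleton_smul_eq (isUnit_iff_ne_zero.mpr (inv_ne_zero hc0)) u₂
  rw [h1, h2, ← hyz']

open Classical in
lemma rthree_surj (hH : finrank F H + 1 = n) (hxH : x ≤ H) [Fintype (Gsub F n H)]
    (m : Submodule F (Fin n → F) → ℂ)
    (hm : m ∈ Mcomp F n H (1 : Gsub F n H →* ℂ) {y | ¬ y ≤ H}) :
    ∃ v : Submodule F (Fin n → F) → ℂ,
      (∀ y, ¬ y ≤ H → v y = 0) ∧ (RthreeT F n x H).mulVec v = m := by
  obtain ⟨hm1, hm2⟩ := hm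
  obtain ⟨u0, -, hu0⟩ := SetLike.exists_of_lt (H_lt_top hH)
  refine ⟨fun z => if z ≤ H then m (z ⊔ Submodule.span F {u0}) else 0,
    fun y hy => if_neg hy, ?_⟩
  rw [rthree_apply hH hxH _ (fun y hy => if_neg hy)]
  funext y
  by_cases hy : y ≤ H
  · rw [if_pos hy]
    exact (hm1 y (by simp [Set.mem_setOf_eq, hy])).symm
  · rw [if_neg hy, if_pos (inf_le_left : H ⊓ y ≤ H)]
    set y2 := (H ⊓ y) ⊔ Submodule.span F {u0} with hy2def
    have hsp := sup_point (inf_le_left : H ⊓ y ≤ H) hu0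
    have hy2 : ¬ y2 ≤ H := hsp.2
    have hry := inf_rank hH hy
    have hry2 := inf_rank hH hy2
    have hfr2 : finrank F ↥y2 = finrank F ↥(H ⊓ y) + 1 := hsp.1
    have hinf2 : H ⊓ y = H ⊓ y2 :=
      Submodule.eq_of_le_of_finrank_le (le_inf inf_le_left le_sup_left) (by omega)
    obtain ⟨g, hg⟩ := exists_transvection hH hy hy2 hinf2
    have := hm2 g⁻¹ y
    rw [MonoidHom.one_apply, one_mul, inv_inv] at this
    rw [← this, hg]

end Main

open Classical in
/-- `R̃₃` maps `ℂP̃₀` bijectively onto `M(1_G)`, and the stated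
commutation identities hold on `ℂP(x,H) = ℂP̃₀`. -/
theorem Rthree_iso (F : Type) [Field F] [Fintype F] (a b : ℕ)
    (x H : Submodule F (Fin (a + b + 1) → F))
    (hx : finrank F x = a) (hH : finrank F H = a + b) (hxH : x ≤ H)
    [Fintype (Gsub F (a + b + 1) H)] :
    (∀ v w : Submodule F (Fin (a + b + 1) → F) → ℂ,
      (∀ y, ¬y ≤ H → v y = 0) → (∀ y, ¬y ≤ H → w y = 0) →
      (RthreeT F (a + b + 1) x H).mulVec v = (RthreeT F (a + b + 1) x H).mulVec w →
      v = w)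
    ∧ (∀ v : Submodule F (Fin (a + b + 1) → F) → ℂ, (∀ y, ¬y ≤ H → v y = 0) →
        (RthreeT F (a + b + 1) x H).mulVec v
          ∈ Mcomp F (a + b + 1) H (1 : Gsub F (a + b + 1) H →* ℂ) {y | ¬y ≤ H})
    ∧ (∀ m ∈ Mcomp F (a + b + 1) H (1 : Gsub F (a + b + 1) H →* ℂ) {y | ¬y ≤ H},
        ∃ v : Submodule F (Fin (a + b + 1) → F) → ℂ,
          (∀ y, ¬y ≤ H → v y = 0) ∧ (RthreeT F (a + b + 1) x H).mulVec v = m)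
    ∧ ∀ v : Submodule F (Fin (a + b + 1) → F) → ℂ, (∀ y, ¬y ≤ H → v y = 0) →
        ((LoneT F (a + b + 1) x H).mulVec ((RthreeT F (a + b + 1) x H).mulVec v)
            = (RthreeT F (a + b + 1) x H).mulVec ((LoneRel F (a + b + 1) x H).mulVec v))
        ∧ ((LtwoT F (a + b + 1) x H).mulVec ((RthreeT F (a + b + 1) x H).mulVec v)
            = (RthreeT F (a + b + 1) x H).mulVec ((LtwoRel F (a + b + 1) x H).mulVec v))
        ∧ (∀ i j : ℕ, i ≤ a → j ≤ b →
            (LthreeT F (a + b + 1) x H).mulVec ((RthreeT F (a + b + 1) x H).mulVec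
                ((EstarRel F (a + b + 1) x H i j).mulVec v))
              = (Fintype.card F : ℂ) ^ ((a : ℤ) + b - i - j) •
                  (EstarRel F (a + b + 1) x H i j).mulVec v)
        ∧ ((RoneT F (a + b + 1) x H).mulVec ((RthreeT F (a + b + 1) x H).mulVec v)
            = (Fintype.card F : ℂ) •
                (RthreeT F (a + b + 1) x H).mulVec ((RoneRel F (a + b + 1) x H).mulVec v))
        ∧ ((RtwoT F (a + b + 1) x H).mulVec ((RthreeT F (a + b + 1) x H).mulVec v)
            = (Fintype.card F : ℂ) •
                (RthreeT F (a + b + 1) x H).mulVec ((RtwoRel F (a + b + 1) x H).mulVec v))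
        ∧ ((RthreeT F (a + b + 1) x H).mulVec ((RthreeT F (a + b + 1) x H).mulVec v) = 0)
        ∧ (∀ i j : ℕ, i ≤ a → j ≤ b →
            (EstarT F (a + b + 1) x H i j 0).mulVec ((RthreeT F (a + b + 1) x H).mulVec v)
              = 0)
        ∧ (∀ i j : ℕ, i ≤ a → j ≤ b →
            (EstarT F (a + b + 1) x H i j 1).mulVec ((RthreeT F (a + b + 1) x H).mulVec v)
              = (RthreeT F (a + b + 1) x H).mulVec
                  ((EstarRel F (a + b + 1) x H i j).mulVec v)) := by
  classical
  have hH' : finrank F H + 1 = a + b + 1 := by omega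
  refine ⟨fun v w hv hw h => rthree_inj hH' hxH v w hv hw h,
    fun v hv => rthree_mem_M hH' hxH v hv,
    fun m hm => rthree_surj hH' hxH m hm,
    fun v hv => ⟨?_, ?_, ?_, ?_, ?_, rthree_sq hH' hxH v hv,
      fun i j _ _ => estar_zero hH' hxH i j v hv,
      fun i j _ _ => estar_one hH' hxH i j v hv⟩⟩
  · have h1 : LoneT F (a + b + 1) x H = genL x H (fun p q => p + 1 = q) := by
      funext y z
      rw [LoneT, genL]
      split_ifs <;> rfl
    have h2 : LoneRel F (a + b + 1) x H = genLRel x H (fun p q => p + 1 = q) := by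
      funext y z
      rw [LoneRel, genLRel]
      split_ifs <;> rfl
    rw [h1, h2]
    exact genL_comm hH' hxH _ v hv
  · have h1 : LtwoT F (a + b + 1) x H = genL x H (fun p q => p = q) := by
      funext y z
      rw [LtwoT, genL]
      split_ifs <;> rfl
    have h2 : LtwoRel F (a + b + 1) x H = genLRel x H (fun p q => p = q) := by
      funext y z
      rw [LtwoRel, genLRel]
      split_ifs <;> rfl
    rw [h1, h2]
    exact genL_comm hH' hxH _ v hv
  · intro i j hi hj
    have := lthree_estar hH' hxH i j v
    rw [this]
    congr 1
    have he : (a + b + 1) - 1 - (i + j) = a + b - i - j := by omega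
    rw [he]
    have he2 : ((a : ℤ) + b - i - j) = ((a + b - i - j : ℕ) : ℤ) := by omega
    rw [he2, zpow_natCast]
  · have h1 : RoneT F (a + b + 1) x H = genR x H (fun p q => p + 1 = q) := by
      funext y z
      rw [RoneT, genR]
      split_ifs <;> rfl
    have h2 : RoneRel F (a + b + 1) x H = genRRel x H (fun p q => p + 1 = q) := by
      funext y z
      rw [RoneRel, genRRel]
      split_ifs <;> rfl
    rw [h1, h2]
    exact genR_comm hH' hxH _ v hv
  · have h1 : RtwoT F (a + b + 1) x H = genR x H (fun p q => p = q) := by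
      funext y z
      rw [RtwoT, genR]
      split_ifs <;> rfl
    have h2 : RtwoRel F (a + b + 1) x H = genRRel x H (fun p q => p = q) := by
      funext y z
      rw [RtwoRel, genRRel]
      split_ifs <;> rfl
    rw [h1, h2]
    exact genR_comm hH' hxH _ v hv
end
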